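/- arXiv:1602.02195 — 5 statements merged into one kernel-verified Lean document; each statement's English description precedes it below -/
import Mathlib

section
/- If the Laurent polynomial a(h) has a root of multiplicity > 1 (equivalently, gcd(a, a') is a nonunit in ℂ[h^{±1}]), then the Poisson generalized Weyl algebra A₁ is not Poisson simple: the ideal generated by x, y, and gcd(a,a') is a proper nonzero Poisson ideal. -/
set_option maxHeartbeats 1000000
set_option synthInstance.maxHeartbeats 1000000


/- Common setup: the Poisson generalized Weyl algebra
   `A₁ = ℂ[h^{±1},x,y]/⟨xy - a(h)⟩` with Poisson bracket
   `{x,h} = hx`, `{y,h} = -hy`, `{y,x} = -a'(h)h`. -/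

noncomputable section
open LaurentPolynomial

/-- `ℂ[h^{±1}]`, the ring of complex Laurent polynomials in `h = T 1`. -/
abbrev L : Type := LaurentPolynomial ℂ

/-- The formal derivative `a'` of a Laurent polynomial `a`. -/
def lderiv (a : L) : L := Finsupp.sum (AddMonoidAlgebra.coeff a) fun n c => LaurentPolynomial.C ((n : ℂ) * c) * T (n - 1)

/-- Evaluation of a Laurent polynomial at a (nonzero) complex number `z`. -/
def leval (z : ℂ) (a : L) : ℂ := Finsupp.sum (AddMonoidAlgebra.coeff a) fun n c => c * z ^ n

/-- The Laurent polynomial `a(γ·h)`. -/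
def lscale (γ : ℂ) (a : L) : L := Finsupp.sum (AddMonoidAlgebra.coeff a) fun n c => LaurentPolynomial.C (c * γ ^ n) * T n

/-- The Laurent polynomial `a(γ·h⁻¹)`. -/
def lsubinv (γ : ℂ) (a : L) : L := Finsupp.sum (AddMonoidAlgebra.coeff a) fun n c => LaurentPolynomial.C (c * γ ^ n) * T (-n)

/-- `B₁ = ℂ[h^{±1}, x, y]` (commutative), with `x = X 0`, `y = X 1`. -/
abbrev B1 : Type := MvPolynomial (Fin 2) L

/-- The inclusion `ℂ[h^{±1}] → ℂ[h^{±1},x,y]`. -/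
def ih : L →+* B1 := MvPolynomial.C

/-- `h ∈ B₁`. -/
def Bh : B1 := ih (T 1)
/-- `x ∈ B₁`. -/
def Bx : B1 := MvPolynomial.X 0
/-- `y ∈ B₁`. -/
def By : B1 := MvPolynomial.X 1

/-- The ideal `⟨xy - a(h)⟩` of `ℂ[h^{±1},x,y]`. -/
def GWI (a : L) : Ideal B1 := Ideal.span {Bx * By - ih a}

/-- The Poisson generalized Weyl algebra `A₁ = ℂ[h^{±1},x,y]/⟨xy - a(h)⟩`, as a
commutative ℂ-algebra. -/
abbrev GW (a : L) : Type := B1 ⧸ GWI a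

/-- The canonical projection `B₁ → A₁`. -/
def gp (a : L) : B1 →+* GW a := Ideal.Quotient.mk (GWI a)
/-- `h ∈ A₁`. -/
def gH (a : L) : GW a := gp a Bh
/-- `x ∈ A₁`. -/
def gX (a : L) : GW a := gp a Bx
/-- `y ∈ A₁`. -/
def gY (a : L) : GW a := gp a By
/-- `h^i ∈ A₁`, for `i : ℤ`. -/
def gHp (a : L) (i : ℤ) : GW a := gp a (ih (T i))

/-- `β` is a Poisson bracket on the commutative ℂ-algebra `A`: ℂ-bilinear (via
linearity in the first argument together with antisymmetry), antisymmetric,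
satisfying the Leibniz rule and the Jacobi identity. -/
def IsPoissonBracket {A : Type} [CommRing A] [Algebra ℂ A] (β : A → A → A) : Prop :=
  (∀ (r : ℂ) (u v w : A), β (r • u + v) w = r • β u w + β v w) ∧
  (∀ u v : A, β u v = - β v u) ∧
  (∀ u v w : A, β (u * v) w = u * β v w + β u w * v) ∧
  (∀ u v w : A, β u (β v w) + β v (β w u) + β w (β u v) = 0)

/-- `β` is the Poisson bracket of the Poisson generalized Weyl algebra `A₁`,
determined by `{x,h} = hx`, `{y,h} = -hy`, `{y,x} = -a'(h)h`. -/
def IsGWBracket (a : L) (β : GW a → GW a → GW a) : Prop :=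
  IsPoissonBracket β ∧
  β (gX a) (gH a) = gH a * gX a ∧
  β (gY a) (gH a) = -(gH a * gY a) ∧
  β (gY a) (gX a) = -(gp a (ih (lderiv a)) * gH a)

/-- The homogeneous component `W_k` of `A₁`: `ℂ[h^{±1}]x^k` for `k > 0`,
`ℂ[h^{±1}]` for `k = 0`, and `ℂ[h^{±1}]y^{-k}` for `k < 0`; namely the ℂ-span of
the elements `h^m x^k` (resp. `h^m`, `h^m y^{-k}`) for `m ∈ ℤ`. -/
def W (a : L) (k : ℤ) : Submodule ℂ (GW a) :=
  Submodule.span ℂ {w | ∃ m : ℤ, w = gHp a m *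
    (if 0 ≤ k then gX a ^ k.toNat else gY a ^ (-k).toNat)}


/-! ### Evaluation of Laurent polynomials -/

lemma leval_single (z : ℂ) (n : ℤ) (c : ℂ) : leval z (AddMonoidAlgebra.single n c) = c * z ^ n := by
  unfold _root_.leval
  rw [AddMonoidAlgebra.coeff_single, Finsupp.sum_single_index]
  simp

lemma leval_add (z : ℂ) (p q : L) : leval z (p + q) = leval z p + leval z q := by
  unfold _root_.leval; rw [AddMonoidAlgebra.coeff_add]; exact Finsupp.sum_add_index' (fun _ => by simp) (fun _ _ _ => by ring)

lemma leval_C_mul_T (z : ℂ) (n : ℤ) (c : ℂ) :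
    leval z (LaurentPolynomial.C c * T n) = c * z ^ n := by
  rw [← single_eq_C_mul_T, leval_single]

lemma leval_mul (z : ℂ) (hz : z ≠ 0) (p q : L) :
    leval z (p * q) = leval z p * leval z q := by
  induction p using LaurentPolynomial.induction_on' with
  | add p p' hp hp' => rw [add_mul, leval_add, leval_add, hp, hp', add_mul]
  | C_mul_T n c =>
    induction q using LaurentPolynomial.induction_on' with
    | add q q' hq hq' => rw [mul_add, leval_add, leval_add, hq, hq', mul_add]
    | C_mul_T m d =>
      have key : (LaurentPolynomial.C c * T n) * (LaurentPolynomial.C d * T m)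
          = LaurentPolynomial.C (c * d) * T (n + m) := by
        rw [T_add, map_mul]; ring
      rw [key, leval_C_mul_T, leval_C_mul_T, leval_C_mul_T, zpow_add₀ hz]
      ring

/-- `leval z` as a ring hom, for `z ≠ 0`. -/
def levalRH (z : ℂ) (hz : z ≠ 0) : L →+* ℂ where
  toFun := leval z
  map_one' := by
    rw [show (1 : L) = AddMonoidAlgebra.single 0 1 from rfl, leval_single]; simp
  map_mul' := leval_mul z hz
  map_zero' := by unfold _root_.leval; simp
  map_add' := leval_add z

lemma leval_toLaurent (z : ℂ) (hz : z ≠ 0) (p : Polynomial ℂ) :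
    leval z (Polynomial.toLaurent p) = p.eval z := by
  have : (levalRH z hz).comp Polynomial.toLaurent = Polynomial.evalRingHom z := by
    apply Polynomial.ringHom_ext
    · intro c
      simp only [RingHom.coe_comp, Function.comp_apply, Polynomial.toLaurent_C,
        Polynomial.eval_C, Polynomial.coe_evalRingHom]
      show leval z (LaurentPolynomial.C c) = c
      rw [← mul_one (LaurentPolynomial.C c), ← T_zero, ← single_eq_C_mul_T, leval_single]
      simp
    · simp only [RingHom.coe_comp, Function.comp_apply, Polynomial.toLaurent_X,
        Polynomial.coe_evalRingHom, Polynomial.eval_X]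
      show leval z (T 1) = z
      rw [T, leval_single]; simp
  exact RingHom.congr_fun this p

lemma leval_T (z : ℂ) (n : ℤ) : leval z (T n) = z ^ n := by
  rw [T, leval_single]; simp

lemma leval_C (z : ℂ) (c : ℂ) : leval z (LaurentPolynomial.C c) = c := by
  rw [← mul_one (LaurentPolynomial.C c), ← T_zero, ← single_eq_C_mul_T, leval_single]; simp

lemma root_dvd (l : ℂ) (hl : l ≠ 0) (q : L) (h : leval l q = 0) :
    (T 1 - LaurentPolynomial.C l) ∣ q := by
  obtain ⟨n, p, hp⟩ := q.exists_T_pow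
  have hroot : p.eval l = 0 := by
    have h2 := leval_toLaurent l hl p
    rw [hp, leval_mul l hl, h, zero_mul] at h2
    exact h2.symm
  obtain ⟨c, hc⟩ := Polynomial.dvd_iff_isRoot.mpr hroot
  refine ⟨Polynomial.toLaurent c * T (-(n : ℤ)), ?_⟩
  have h2 : Polynomial.toLaurent p
      = (T 1 - LaurentPolynomial.C l) * Polynomial.toLaurent c := by
    rw [hc, map_mul, map_sub, Polynomial.toLaurent_X, Polynomial.toLaurent_C]
  have h3 : q = Polynomial.toLaurent p * T (-(n : ℤ)) := by
    rw [hp, mul_assoc, ← T_add]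
    simp
  rw [h3, h2, mul_assoc]

lemma sub_not_unit (l : ℂ) (hl : l ≠ 0) :
    ¬ IsUnit (T 1 - LaurentPolynomial.C l : L) := by
  intro h
  have h2 := h.map (levalRH l hl)
  rw [map_sub] at h2
  have h3 : levalRH l hl (T 1) - levalRH l hl (LaurentPolynomial.C l) = 0 := by
    show leval l (T 1) - leval l (LaurentPolynomial.C l) = 0
    rw [leval_T, leval_C]; simp
  rw [h3] at h2
  exact not_isUnit_zero h2

/-! ### Bracket utilities -/

section Bracket

variable {a : L} {β : GW a → GW a → GW a} (hβ : IsGWBracket a β)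
include hβ

lemma br_add_left (u v w : GW a) : β (u + v) w = β u w + β v w := by
  have h := hβ.1.1 1 u v w
  simpa using h

lemma br_zero_left (w : GW a) : β 0 w = 0 := by
  have h : β ((0 : GW a) + 0) w = β 0 w + β 0 w := br_add_left hβ 0 0 w
  rw [add_zero] at h
  exact (left_eq_add.mp h)

lemma br_smul_left (r : ℂ) (u w : GW a) : β (r • u) w = r • β u w := by
  have h := hβ.1.1 r u 0 w
  rw [add_zero, br_zero_left hβ, add_zero] at h
  exact h

lemma br_antisym (u v : GW a) : β u v = -β v u := hβ.1.2.1 u v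

lemma br_leib_left (u v w : GW a) : β (u * v) w = u * β v w + β u w * v :=
  hβ.1.2.2.1 u v w

lemma br_self (u : GW a) : β u u = 0 := by
  have h : β u u + β u u = 0 := by
    nth_rewrite 1 [br_antisym hβ u u]
    exact neg_add_cancel _
  have h2 : (2 : ℂ) • β u u = 0 := by rw [two_smul]; exact h
  calc β u u = ((2 : ℂ)⁻¹ * 2) • β u u := by norm_num
  _ = (2 : ℂ)⁻¹ • ((2 : ℂ) • β u u) := by rw [mul_smul]
  _ = 0 := by rw [h2, smul_zero]

lemma br_add_right (u v w : GW a) : β u (v + w) = β u v + β u w := by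
  rw [br_antisym hβ u (v + w), br_add_left hβ, neg_add,
    ← br_antisym hβ u v, ← br_antisym hβ u w]

lemma br_smul_right (r : ℂ) (u v : GW a) : β u (r • v) = r • β u v := by
  rw [br_antisym hβ u (r • v), br_smul_left hβ, ← smul_neg, ← br_antisym hβ u v]

lemma br_leib_right (u v w : GW a) : β u (v * w) = v * β u w + β u v * w := by
  rw [br_antisym hβ u (v * w), br_leib_left hβ, br_antisym hβ u w, br_antisym hβ u v]
  ring

lemma br_one_right (u : GW a) : β u 1 = 0 := by
  have h : β u 1 = β u 1 + β u 1 := by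
    calc β u 1 = β u (1 * 1) := congrArg (β u) (one_mul (1 : GW a)).symm
    _ = 1 * β u 1 + β u 1 * 1 := br_leib_right hβ u 1 1
    _ = β u 1 + β u 1 := by ring
  exact left_eq_add.mp h

lemma br_one_left (u : GW a) : β 1 u = 0 := by
  rw [br_antisym hβ 1 u, br_one_right hβ, neg_zero]

lemma br_algebraMap_right (u : GW a) (c : ℂ) : β u (algebraMap ℂ (GW a) c) = 0 := by
  rw [Algebra.algebraMap_eq_smul_one, br_smul_right hβ, br_one_right hβ, smul_zero]

lemma br_algebraMap_left (u : GW a) (c : ℂ) : β (algebraMap ℂ (GW a) c) u = 0 := by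
  rw [Algebra.algebraMap_eq_smul_one, br_smul_left hβ, br_one_left hβ, smul_zero]

end Bracket

/-! ### Ring facts and generation in `GW a` -/

lemma gHU (a : L) : gH a * gHp a (-1) = 1 := by
  show gp a (ih (T 1)) * gp a (ih (T (-1))) = 1
  rw [← map_mul, ← map_mul, show (T 1 * T (-1) : L) = 1 by rw [← T_add]; simp,
    map_one, map_one]

lemma L_gen (P : L → Prop)
    (hadd : ∀ p q, P p → P q → P (p + q))
    (hmul : ∀ p q, P p → P q → P (p * q))
    (hC : ∀ c : ℂ, P (LaurentPolynomial.C c))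
    (hT : P (T 1)) (hT' : P (T (-1))) : ∀ p : L, P p := by
  have hpow : ∀ (q : L), P q → ∀ k : ℕ, P (q ^ k) := by
    intro q hq k
    induction k with
    | zero => rw [pow_zero]; simpa using hC 1
    | succ k ihk => rw [pow_succ]; exact hmul _ _ ihk hq
  intro p
  induction p using LaurentPolynomial.induction_on' with
  | add p q hp hq => exact hadd _ _ hp hq
  | C_mul_T n c =>
    refine hmul _ _ (hC c) ?_
    rcases le_or_gt 0 n with h | h
    · have : (T n : L) = T 1 ^ n.toNat := by rw [T_pow]; congr 1; omega
      rw [this]; exact hpow _ hT _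
    · have : (T n : L) = T (-1) ^ (-n).toNat := by rw [T_pow]; congr 1; omega
      rw [this]; exact hpow _ hT' _

lemma GW_gen {a : L} (P : GW a → Prop)
    (hadd : ∀ u v, P u → P v → P (u + v))
    (hmul : ∀ u v, P u → P v → P (u * v))
    (halg : ∀ c : ℂ, P (algebraMap ℂ (GW a) c))
    (hX : P (gX a)) (hY : P (gY a)) (hH : P (gH a)) (hU : P (gHp a (-1))) :
    ∀ r : GW a, P r := by
  intro r
  obtain ⟨f, rfl⟩ := Ideal.Quotient.mk_surjective r
  show P (gp a f)
  induction f using MvPolynomial.induction_on with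
  | C p =>
    refine L_gen (fun p => P (gp a (ih p))) ?_ ?_ ?_ hH hU p
    · intro p q hp hq
      rw [show gp a (ih (p + q)) = gp a (ih p) + gp a (ih q) by rw [RingHom.map_add ih, RingHom.map_add (gp a)]]
      exact hadd _ _ hp hq
    · intro p q hp hq
      rw [show gp a (ih (p * q)) = gp a (ih p) * gp a (ih q) by rw [RingHom.map_mul ih, RingHom.map_mul (gp a)]]
      exact hmul _ _ hp hq
    · intro c
      have : gp a (ih (LaurentPolynomial.C c)) = algebraMap ℂ (GW a) c := rfl
      rw [this]; exact halg c
  | add p q hp hq => rw [map_add]; exact hadd _ _ hp hq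
  | mul_X p i hp =>
    rw [map_mul]
    refine hmul _ _ hp ?_
    fin_cases i
    · exact hX
    · exact hY

/-! ### Nonzero and properness -/

lemma gX_ne_zero {a : L} (ha : a ≠ 0) : gX a ≠ 0 := by
  intro h
  have hmem : Bx ∈ GWI a := by
    rwa [gX, gp, Ideal.Quotient.eq_zero_iff_mem] at h
  obtain ⟨c, hc⟩ := Ideal.mem_span_singleton'.mp hmem
  have h2 := congrArg (MvPolynomial.eval₂Hom (RingHom.id L) ![a, 1]) hc
  rw [RingHom.map_mul, RingHom.map_sub, RingHom.map_mul] at h2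
  rw [show MvPolynomial.eval₂Hom (RingHom.id L) ![a, 1] Bx = a from by simp [Bx],
    show MvPolynomial.eval₂Hom (RingHom.id L) ![a, 1] By = 1 from by simp [By],
    show MvPolynomial.eval₂Hom (RingHom.id L) ![a, 1] (ih a) = a from by
      show MvPolynomial.eval₂Hom (RingHom.id L) ![a, 1] (MvPolynomial.C a) = a
      simp] at h2
  rw [mul_one, sub_self, mul_zero] at h2
  exact ha h2.symm

lemma one_not_mem_J {a : L} (b : L) (hba : b ∣ a) (hbu : ¬ IsUnit b) :
    (1 : GW a) ∉ Ideal.span {gX a, gY a, gp a (ih b)} := by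
  intro hone
  set Q : Ideal L := Ideal.span {b} with hQ
  have hbQ : b ∈ Q := Ideal.subset_span rfl
  have haQ : a ∈ Q := Ideal.mem_span_singleton.mpr hba
  set Ψ : B1 →+* L ⧸ Q := MvPolynomial.eval₂Hom (Ideal.Quotient.mk Q) (fun _ => 0) with hΨ
  have hΨX : Ψ Bx = 0 := by simp [hΨ, Bx]
  have hΨY : Ψ By = 0 := by simp [hΨ, By]
  have hΨC : ∀ p : L, Ψ (ih p) = Ideal.Quotient.mk Q p := by
    intro p
    show Ψ (MvPolynomial.C p) = _
    simp [hΨ]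
  have hgen : Ψ (Bx * By - ih a) = 0 := by
    rw [RingHom.map_sub, RingHom.map_mul, hΨX, hΨY, hΨC, zero_mul, zero_sub,
      Ideal.Quotient.eq_zero_iff_mem.mpr haQ, neg_zero]
  have hker : ∀ x ∈ GWI a, Ψ x = 0 := by
    intro x hx
    have : GWI a ≤ RingHom.ker Ψ := by
      rw [GWI, Ideal.span_le]
      intro z hz
      rw [Set.mem_singleton_iff] at hz
      subst hz
      exact hgen
    exact this hx
  set Ψ' : GW a →+* L ⧸ Q := Ideal.Quotient.lift (GWI a) Ψ hker with hΨ'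
  have hJ : Ideal.span {gX a, gY a, gp a (ih b)} ≤ RingHom.ker Ψ' := by
    rw [Ideal.span_le]
    intro z hz
    simp only [Set.mem_insert_iff, Set.mem_singleton_iff] at hz
    rcases hz with rfl | rfl | rfl
    · show Ψ' (gp a Bx) = 0
      rw [hΨ']
      exact (Ideal.Quotient.lift_mk (GWI a) Ψ hker).trans hΨX
    · show Ψ' (gp a By) = 0
      rw [hΨ']
      exact (Ideal.Quotient.lift_mk (GWI a) Ψ hker).trans hΨY
    · show Ψ' (gp a (ih b)) = 0
      rw [hΨ']
      exact (Ideal.Quotient.lift_mk (GWI a) Ψ hker).trans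
        ((hΨC b).trans (Ideal.Quotient.eq_zero_iff_mem.mpr hbQ))
  have h1 : Ψ' 1 = 0 := hJ hone
  rw [map_one] at h1
  have hone' : (1 : L) ∈ Q := by
    rwa [← Ideal.Quotient.eq_zero_iff_mem, map_one]
  exact hbu (Ideal.span_singleton_eq_top.mp ((Ideal.eq_top_iff_one Q).mpr hone'))

/-! ### The Poisson closure -/

lemma J_closure {a : L} {β : GW a → GW a → GW a} (hβ : IsGWBracket a β)
    (b : L) (hbd : b ∣ lderiv a) :
    ∀ c ∈ Ideal.span {gX a, gY a, gp a (ih b)}, ∀ r : GW a,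
      β c r ∈ Ideal.span {gX a, gY a, gp a (ih b)} := by
  set J := Ideal.span {gX a, gY a, gp a (ih b)} with hJdef
  haveI : J.IsTwoSided := ⟨fun b ha ↦ mul_comm b _ ▸ J.smul_mem _ ha⟩
  have memX : gX a ∈ J := Ideal.subset_span (by simp)
  have memY : gY a ∈ J := Ideal.subset_span (by simp)
  have memB : gp a (ih b) ∈ J := Ideal.subset_span (by simp)
  have memD : gp a (ih (lderiv a)) ∈ J := by
    obtain ⟨c, hc⟩ := hbd
    rw [hc, RingHom.map_mul ih, RingHom.map_mul (gp a)]
    exact Ideal.mul_mem_right _ _ memB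
  have hXH := hβ.2.1
  have hYH := hβ.2.2.1
  have hYX := hβ.2.2.2
  have keyU : ∀ g : GW a, β g (gH a) ∈ J → β g (gHp a (-1)) ∈ J := by
    intro g hg
    have h0 : β g (gH a * gHp a (-1)) = 0 := by
      rw [gHU a]; exact br_one_right hβ g
    rw [br_leib_right hβ] at h0
    have h1 : gH a * β g (gHp a (-1)) = -(β g (gH a) * gHp a (-1)) :=
      eq_neg_of_add_eq_zero_left h0
    have heq : β g (gHp a (-1)) = -(gHp a (-1) * (β g (gH a) * gHp a (-1))) := by
      linear_combination gHp a (-1) * h0 - β g (gHp a (-1)) * gHU a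
    rw [heq]
    exact J.neg_mem (Ideal.mul_mem_left _ _ (Ideal.mul_mem_right _ _ hg))
  have claim_fst : ∀ g : GW a, β g (gX a) ∈ J → β g (gY a) ∈ J → β g (gH a) ∈ J →
      β g (gHp a (-1)) ∈ J → ∀ r, β g r ∈ J := by
    intro g h1 h2 h3 h4
    refine GW_gen (fun r => β g r ∈ J) ?_ ?_ ?_ h1 h2 h3 h4
    · intro u v hu hv
      rw [br_add_right hβ]; exact J.add_mem hu hv
    · intro u v hu hv
      rw [br_leib_right hβ]
      exact J.add_mem (Ideal.mul_mem_left _ _ hv) (Ideal.mul_mem_right _ _ hu)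
    · intro c
      rw [br_algebraMap_right hβ]; exact J.zero_mem
  have claim_snd : ∀ s : GW a, β (gX a) s ∈ J → β (gY a) s ∈ J → β (gH a) s ∈ J →
      β (gHp a (-1)) s ∈ J → ∀ r, β r s ∈ J := by
    intro s h1 h2 h3 h4
    refine GW_gen (fun r => β r s ∈ J) ?_ ?_ ?_ h1 h2 h3 h4
    · intro u v hu hv
      rw [br_add_left hβ]; exact J.add_mem hu hv
    · intro u v hu hv
      rw [br_leib_left hβ]
      exact J.add_mem (Ideal.mul_mem_left _ _ hv) (Ideal.mul_mem_right _ _ hu)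
    · intro c
      rw [br_algebraMap_left hβ]; exact J.zero_mem
  have hXHm : β (gX a) (gH a) ∈ J := by
    rw [hXH]; exact Ideal.mul_mem_left _ _ memX
  have hYHm : β (gY a) (gH a) ∈ J := by
    rw [hYH]; exact J.neg_mem (Ideal.mul_mem_left _ _ memY)
  have keyHU : β (gH a) (gHp a (-1)) ∈ J :=
    keyU _ (by rw [br_self hβ]; exact J.zero_mem)
  have cX : ∀ r, β (gX a) r ∈ J := by
    refine claim_fst (gX a) ?_ ?_ hXHm (keyU _ hXHm)
    · rw [br_self hβ]; exact J.zero_mem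
    · rw [br_antisym hβ, hYX, neg_neg]
      exact Ideal.mul_mem_right _ _ memD
  have cY : ∀ r, β (gY a) r ∈ J := by
    refine claim_fst (gY a) ?_ ?_ hYHm (keyU _ hYHm)
    · rw [hYX]
      exact J.neg_mem (Ideal.mul_mem_right _ _ memD)
    · rw [br_self hβ]; exact J.zero_mem
  have cH : ∀ r, β r (gH a) ∈ J := by
    refine claim_snd (gH a) hXHm hYHm ?_ ?_
    · rw [br_self hβ]; exact J.zero_mem
    · rw [br_antisym hβ]; exact J.neg_mem keyHU
  have cU : ∀ r, β r (gHp a (-1)) ∈ J := by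
    refine claim_snd _ (keyU _ hXHm) (keyU _ hYHm) keyHU ?_
    rw [br_self hβ]; exact J.zero_mem
  have cB : ∀ r, β (gp a (ih b)) r ∈ J := by
    refine claim_fst _ ?_ ?_ (cH _) (cU _)
    · rw [br_antisym hβ]; exact J.neg_mem (cX _)
    · rw [br_antisym hβ]; exact J.neg_mem (cY _)
  intro c hc r
  induction hc using Submodule.span_induction with
  | mem x hx =>
    simp only [Set.mem_insert_iff, Set.mem_singleton_iff] at hx
    rcases hx with rfl | rfl | rfl
    · exact cX r
    · exact cY r
    · exact cB r
  | zero => rw [br_zero_left hβ]; exact J.zero_mem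
  | add x y hx hy ihx ihy => rw [br_add_left hβ]; exact J.add_mem ihx ihy
  | smul t x hx ihx =>
    rw [smul_eq_mul, br_leib_left hβ]
    exact J.add_mem (Ideal.mul_mem_left _ _ ihx) (Ideal.mul_mem_left _ _ (show x ∈ J from hx))

/-- If the Laurent polynomial `a` has a root of multiplicity `> 1`
(i.e. a common root `λ ≠ 0` of `a` and `a'`; equivalently `gcd(a,a')` is a
nonunit), then `A₁` is not Poisson simple: for any nonunit common divisor `b` of
`a` and `a'` (such as `gcd(a,a')`), the ideal generated by `x`, `y` and `b(h)`
is a proper nonzero Poisson ideal; in particular there exists a proper nonzero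
Poisson ideal. -/
theorem GW_not_poisson_simple (a : L) (ha : a ≠ 0) (hnu : ¬ IsUnit a)
    (β : GW a → GW a → GW a) (hβ : IsGWBracket a β)
    (hmult : ∃ l : ℂ, l ≠ 0 ∧ leval l a = 0 ∧ leval l (lderiv a) = 0) :
    (∀ b : L, b ∣ a → b ∣ lderiv a → ¬ IsUnit b →
      (Ideal.span {gX a, gY a, gp a (ih b)} ≠ ⊥ ∧
       Ideal.span {gX a, gY a, gp a (ih b)} ≠ ⊤ ∧
       ∀ c ∈ Ideal.span {gX a, gY a, gp a (ih b)}, ∀ r : GW a,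
         β c r ∈ Ideal.span {gX a, gY a, gp a (ih b)})) ∧
    (∃ I : Ideal (GW a), I ≠ ⊥ ∧ I ≠ ⊤ ∧ ∀ c ∈ I, ∀ r : GW a, β c r ∈ I) := by
  have part1 : ∀ b : L, b ∣ a → b ∣ lderiv a → ¬ IsUnit b →
      (Ideal.span {gX a, gY a, gp a (ih b)} ≠ ⊥ ∧
       Ideal.span {gX a, gY a, gp a (ih b)} ≠ ⊤ ∧
       ∀ c ∈ Ideal.span {gX a, gY a, gp a (ih b)}, ∀ r : GW a,
         β c r ∈ Ideal.span {gX a, gY a, gp a (ih b)}) := by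
    intro b hba hbd hbu
    refine ⟨?_, ?_, J_closure hβ b hbd⟩
    · intro hbot
      have hmem : gX a ∈ Ideal.span {gX a, gY a, gp a (ih b)} :=
        Ideal.subset_span (by simp)
      rw [hbot] at hmem
      exact gX_ne_zero ha (by simpa using hmem)
    · intro htop
      exact one_not_mem_J b hba hbu (htop ▸ Submodule.mem_top)
  refine ⟨part1, ?_⟩
  obtain ⟨l, hl0, hla, hld⟩ := hmult
  obtain ⟨h1, h2, h3⟩ := part1 (T 1 - LaurentPolynomial.C l)
    (root_dvd l hl0 a hla) (root_dvd l hl0 _ hld) (sub_not_unit l hl0)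
  exact ⟨_, h1, h2, h3⟩
end
end

section
/- If every root of the Laurent polynomial a(h) is simple (equivalently, a and a' generate the unit ideal of ℂ[h^{±1}]), then the Poisson generalized Weyl algebra A₁ is Poisson simple. -/
/- Common setup: the Poisson generalized Weyl algebra
   `A₁ = ℂ[h^{±1},x,y]/⟨xy - a(h)⟩` with Poisson bracket
   `{x,h} = hx`, `{y,h} = -hy`, `{y,x} = -a'(h)h`. -/

noncomputable section
open LaurentPolynomial

set_option maxHeartbeats 1000000
set_option synthInstance.maxHeartbeats 1000000

namespace Aux

lemma lderiv_single (n : ℤ) (c : ℂ) :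
    lderiv (AddMonoidAlgebra.single n c) = C ((n : ℂ) * c) * T (n - 1) := by
  unfold lderiv
  rw [AddMonoidAlgebra.coeff_single, Finsupp.sum_single_index]
  simp

lemma lderiv_CT (n : ℤ) (c : ℂ) :
    lderiv (C c * T n) = C ((n : ℂ) * c) * T (n - 1) := by
  rw [← single_eq_C_mul_T, lderiv_single]

lemma lderiv_add (p q : L) : lderiv (p + q) = lderiv p + lderiv q := by
  unfold lderiv
  rw [AddMonoidAlgebra.coeff_add, Finsupp.sum_add_index]
  · intro n _; simp
  · intro n _ c d
    rw [mul_add, map_add, add_mul]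

lemma lderiv_T (m : ℤ) : lderiv (T m) = C (m : ℂ) * T (m - 1) := by
  have : (T m : L) = AddMonoidAlgebra.single m 1 := rfl
  rw [this, lderiv_single, mul_one]

lemma lderiv_zero : lderiv 0 = 0 := by
  unfold lderiv; simp

lemma lderiv_mul_T (f : L) (m : ℤ) :
    lderiv (f * T m) = lderiv f * T m + C (m : ℂ) * f * T (m - 1) := by
  induction f using LaurentPolynomial.induction_on' with
  | add p q hp hq =>
    rw [add_mul, lderiv_add, lderiv_add, hp, hq]; ring
  | C_mul_T n c =>
    rw [mul_assoc, ← T_add, lderiv_CT, lderiv_CT]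
    rw [mul_T_assoc, ← mul_assoc (C (m:ℂ)), ← map_mul, mul_T_assoc]
    rw [show n + m - 1 = n - 1 + m by ring, show n + (m - 1) = n - 1 + m by ring]
    rw [← single_eq_C_mul_T, ← single_eq_C_mul_T, ← single_eq_C_mul_T, ← AddMonoidAlgebra.single_add]
    congr 1
    push_cast
    ring

open Polynomial in
lemma lderiv_toLaurent (P : Polynomial ℂ) :
    lderiv (toLaurent P) = toLaurent (derivative P) := by
  induction P using Polynomial.induction_on' with
  | add p q hp hq => rw [map_add, lderiv_add, hp, hq, derivative_add, map_add]
  | monomial n c =>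
    rw [Polynomial.toLaurent_C_mul_T, lderiv_CT, derivative_monomial, Polynomial.toLaurent_C_mul_T]
    cases n with
    | zero => simp
    | succ k => push_cast; ring_nf


set_option maxHeartbeats 1000000
set_option synthInstance.maxHeartbeats 1000000

/-- scalar inclusion -/
def ε (a : L) (z : ℂ) : GW a := algebraMap ℂ (GW a) z

lemma eps_eq (a : L) (z : ℂ) : ε a z = gp a (ih (C z)) := rfl

section Bracket
variable {a : L} {β : GW a → GW a → GW a} (hβ : IsGWBracket a β)
include hβ

lemma badd (u v w : GW a) : β (u + v) w = β u w + β v w := by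
  have := hβ.1.1 1 u v w; simpa using this

lemma bzero (w : GW a) : β 0 w = 0 := by
  have := badd hβ 0 0 w; simpa using this.symm

lemma bsmul (r : ℂ) (u w : GW a) : β (r • u) w = r • β u w := by
  have := hβ.1.1 r u 0 w; simpa [bzero hβ] using this

lemma beps (z : ℂ) (u w : GW a) : β (ε a z * u) w = ε a z * β u w := by
  unfold ε
  rw [← Algebra.smul_def, ← Algebra.smul_def, bsmul hβ]

lemma bneg (u w : GW a) : β (-u) w = -β u w := by
  have := bsmul hβ (-1) u w; simpa using this

lemma bskew (u v : GW a) : β u v = -β v u := hβ.1.2.1 u v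

lemma bleib (u v w : GW a) : β (u * v) w = u * β v w + β u w * v := hβ.1.2.2.1 u v w

lemma bleibr (u v w : GW a) : β u (v * w) = v * β u w + β u v * w := by
  rw [bskew hβ u (v * w), bleib hβ v w u, bskew hβ w u, bskew hβ v u]
  ring

lemma bself (u : GW a) : β u u = 0 := by
  have h := bskew hβ u u
  have h3 : β u u + β u u = 0 := by nth_rewrite 1 [h]; exact neg_add_cancel _
  have h2 : (2 : ℂ) • β u u = 0 := by rw [two_smul]; exact h3
  have h4 := congrArg (fun t => ((2:ℂ)⁻¹) • t) h2
  simpa [smul_smul] using h4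

lemma bone (w : GW a) : β (1 : GW a) w = 0 := by
  have h := bleib hβ 1 1 w
  rw [one_mul (1 : GW a), one_mul (β (1 : GW a) w), mul_one (β (1 : GW a) w)] at h
  exact left_eq_add.mp h

lemma boner (w : GW a) : β w (1 : GW a) = 0 := by
  rw [bskew hβ, bone hβ, neg_zero]

lemma bepsr (z : ℂ) (u w : GW a) : β w (ε a z * u) = ε a z * β w u := by
  rw [bskew hβ, beps hβ, bskew hβ w u]; ring

lemma bsum (s : Finset ℤ) (f : ℤ → GW a) (w : GW a) :
    β (∑ k ∈ s, f k) w = ∑ k ∈ s, β (f k) w := by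
  classical
  induction s using Finset.induction_on with
  | empty => simpa using bzero hβ w
  | insert _ _ hk ih2 =>
    rw [Finset.sum_insert hk, Finset.sum_insert hk, badd hβ, ih2]

end Bracket

section Struct
variable {a : L}

lemma gHp_add' (m n : ℤ) : gHp a (m + n) = gHp a m * gHp a n := by
  unfold gHp; rw [T_add, map_mul, map_mul]

lemma gHp_zero' : gHp a 0 = 1 := by
  unfold gHp; rw [T_zero, map_one, map_one]

lemma gH_eq : gH a = gHp a 1 := rfl

lemma gHp_cancel (m : ℤ) : gHp a (-m) * gHp a m = 1 := by
  rw [← gHp_add', neg_add_cancel, gHp_zero']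

lemma gpih_CT (z : ℂ) (m : ℤ) : gp a (ih (C z * T m)) = ε a z * gHp a m := by
  rw [map_mul, map_mul, eps_eq]; rfl

lemma gXY : gX a * gY a = gp a (ih a) := by
  have h : Bx * By - ih a ∈ GWI a := Ideal.subset_span rfl
  have := Ideal.Quotient.eq.mpr (show Bx * By - ih a - 0 ∈ GWI a by simpa using h)
  unfold gX gY gp
  rw [← map_mul]
  calc Ideal.Quotient.mk (GWI a) (Bx * By)
      = Ideal.Quotient.mk (GWI a) (Bx * By - ih a) + Ideal.Quotient.mk (GWI a) (ih a) := by
        rw [← map_add]; ring_nf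
    _ = Ideal.Quotient.mk (GWI a) (ih a) := by rw [this, map_zero, zero_add]

lemma gYX : gY a * gX a = gp a (ih a) := by rw [mul_comm (gY a) (gX a), gXY]

end Struct

section Bracket2
variable {a : L} {β : GW a → GW a → GW a} (hβ : IsGWBracket a β)
include hβ

/-- H1, nat case -/
lemma bhp_nat (v e : GW a) (he : β v (gH a) = e) (n : ℕ) :
    β v (gHp a (n : ℤ)) = ε a (n : ℂ) * (gHp a ((n : ℤ) - 1) * e) := by
  induction n with
  | zero =>
    rw [Nat.cast_zero, gHp_zero', boner hβ]
    have hz : ε a ((0:ℕ):ℂ) = 0 := by unfold ε; norm_num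
    rw [hz]
    ring
  | succ n ihn =>
    have h1 : gHp a ((n : ℤ) + 1) = gHp a (n : ℤ) * gH a := by
      rw [gHp_add']; rfl
    rw [Nat.cast_succ, h1, bleibr hβ, ihn, he]
    have h2 : gHp a ((n : ℤ) - 1) * gH a = gHp a (n : ℤ) := by
      rw [gH_eq, ← gHp_add']; norm_num
    have h3 : ε a ((n : ℂ) + 1) = ε a (n : ℂ) + ε a 1 := by unfold ε; rw [map_add]
    have h4 : ε a (1 : ℂ) = 1 := by unfold ε; rw [map_one]
    push_cast
    rw [h3, h4]
    calc gHp a (n:ℤ) * e + ε a (n:ℂ) * (gHp a ((n:ℤ)-1) * e) * gH a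
        = gHp a (n:ℤ) * e + ε a (n:ℂ) * ((gHp a ((n:ℤ)-1) * gH a) * e) := by ring
      _ = gHp a (n:ℤ) * e + ε a (n:ℂ) * (gHp a (n:ℤ) * e) := by rw [h2]
      _ = (ε a (n:ℂ) + 1) * (gHp a ((n:ℤ)+1-1) * e) := by norm_num; ring

/-- H1 -/
lemma bhp (v e : GW a) (he : β v (gH a) = e) (m : ℤ) :
    β v (gHp a m) = ε a (m : ℂ) * (gHp a (m - 1) * e) := by
  rcases Int.eq_nat_or_neg m with ⟨n, hn | hn⟩
  · subst hn; exact bhp_nat hβ v e he n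
  · subst hn
    have h0 : β v ((1 : GW a)) = 0 := boner hβ v
    have h1 : gHp a (n : ℤ) * gHp a (-(n : ℤ)) = 1 := by
      rw [← gHp_add']; norm_num [gHp_zero']
    have h2 := bleibr hβ v (gHp a (n : ℤ)) (gHp a (-(n : ℤ)))
    rw [h1, h0, bhp_nat hβ v e he n] at h2
    have h6 : ε a ((-(n:ℤ) : ℤ) : ℂ) = - ε a ((n:ℤ) : ℂ) := by
      unfold ε; rw [← map_neg]; norm_num
    have h7 : gHp a (-(n:ℤ)) * (gHp a ((n:ℤ)-1) * gHp a (-(n:ℤ))) = gHp a (-(n:ℤ)-1) := by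
      rw [← gHp_add', ← gHp_add']; ring_nf
    rw [h6]
    linear_combination (-(gHp a (-(n:ℤ)))) * h2 - (β v (gHp a (-(n:ℤ)))) * gHp_cancel (a := a) (n:ℤ) - (ε a ((n:ℤ):ℂ) * e) * h7

/-- H2 -/
lemma bq (q : L) (v e : GW a) (he : β v (gH a) = e) :
    β (gp a (ih q)) v = -(gp a (ih (lderiv q)) * e) := by
  induction q using LaurentPolynomial.induction_on' with
  | add p r hp hr =>
    rw [map_add, map_add, badd hβ, hp, hr, lderiv_add, map_add, map_add]; ring
  | C_mul_T n c =>
    rw [gpih_CT, beps hβ, bskew hβ (gHp a n) v, bhp hβ v e he n, lderiv_CT, gpih_CT]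
    have hm : ε a ((n:ℂ) * c) = ε a (n:ℂ) * ε a c := by unfold ε; rw [map_mul]
    rw [hm]; ring

lemma bqh (q : L) : β (gp a (ih q)) (gH a) = 0 := by
  rw [bq hβ q (gH a) 0 (bself hβ (gH a))]; ring

lemma bqx (q : L) : β (gp a (ih q)) (gX a) = -(gp a (ih (lderiv q)) * (gH a * gX a)) := by
  have hx : β (gX a) (gH a) = gH a * gX a := hβ.2.1
  exact bq hβ q (gX a) _ hx

lemma bqy (q : L) : β (gp a (ih q)) (gY a) = gp a (ih (lderiv q)) * (gH a * gY a) := by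
  have hy : β (gY a) (gH a) = -(gH a * gY a) := hβ.2.2.1
  rw [bq hβ q (gY a) _ hy]; ring

lemma bxpow (n : ℕ) : β (gX a ^ n) (gH a) = ε a (n:ℂ) * (gH a * gX a ^ n) := by
  induction n with
  | zero =>
    have hz : ε a ((0:ℕ):ℂ) = 0 := by unfold ε; norm_num
    rw [pow_zero, bone hβ, hz]; ring
  | succ n ihn =>
    have hs : ε a ((n+1:ℕ):ℂ) = ε a (n:ℂ) + 1 := by
      unfold ε; push_cast; ring
    rw [pow_succ, bleib hβ, ihn, hβ.2.1, hs]; ring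

lemma bypow (n : ℕ) : β (gY a ^ n) (gH a) = -(ε a (n:ℂ) * (gH a * gY a ^ n)) := by
  induction n with
  | zero =>
    have hz : ε a ((0:ℕ):ℂ) = 0 := by unfold ε; norm_num
    rw [pow_zero, bone hβ, hz]; ring
  | succ n ihn =>
    have hs : ε a ((n+1:ℕ):ℂ) = ε a (n:ℂ) + 1 := by
      unfold ε; push_cast; ring
    rw [pow_succ, bleib hβ, ihn, hβ.2.2.1, hs]; ring

end Bracket2

/-- monomial in `B1` of degree `k` -/
def mono (k : ℤ) : B1 := if 0 ≤ k then Bx ^ k.toNat else By ^ (-k).toNat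

section Struct2
variable {a : L}

lemma mono_x {k : ℤ} (hk : 0 ≤ k) : gp a (mono k) = gX a ^ k.toNat := by
  unfold mono; rw [if_pos hk, map_pow]; rfl

lemma mono_y {k : ℤ} (hk : k ≤ 0) : gp a (mono k) = gY a ^ (-k).toNat := by
  unfold mono
  by_cases h0 : 0 ≤ k
  · have : k = 0 := le_antisymm hk h0
    subst this
    norm_num
  · rw [if_neg h0, map_pow]; rfl

lemma MX (k : ℤ) :
    gp a (mono k) * gX a = gp a (ih (if k < 0 then a else 1)) * gp a (mono (k + 1)) := by
  by_cases hk : 0 ≤ k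
  · rw [if_neg (by omega), map_one, map_one, one_mul ((gp a) (mono (k+1))), mono_x hk, mono_x (by omega : (0:ℤ) ≤ k + 1)]
    rw [show (k+1).toNat = k.toNat + 1 by omega, pow_succ]
  · rw [if_pos (by omega), mono_y (by omega : k ≤ 0), mono_y (by omega : k + 1 ≤ 0)]
    rw [show (-k).toNat = (-(k+1)).toNat + 1 by omega, pow_succ, mul_assoc, gYX]
    ring

lemma MY (k : ℤ) :
    gp a (mono k) * gY a = gp a (ih (if 0 < k then a else 1)) * gp a (mono (k - 1)) := by
  by_cases hk : 0 < k
  · rw [if_pos hk, mono_x (by omega : (0:ℤ) ≤ k), mono_x (by omega : (0:ℤ) ≤ k - 1)]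
    rw [show k.toNat = (k-1).toNat + 1 by omega, pow_succ, mul_assoc, gXY]
    ring
  · rw [if_neg hk, map_one, map_one, one_mul ((gp a) (mono (k-1))), mono_y (by omega : k ≤ 0), mono_y (by omega : k - 1 ≤ 0)]
    rw [show (-(k-1)).toNat = (-k).toNat + 1 by omega, pow_succ]

lemma monoprod (k : ℤ) : gp a (mono k) * gp a (mono (-k)) = gp a (ih (a ^ k.natAbs)) := by
  rcases le_or_gt 0 k with hk | hk
  · rw [mono_x hk, mono_y (by omega : -k ≤ 0), neg_neg, ← mul_pow (gX a) (gY a) k.toNat, gXY, ← map_pow, ← map_pow]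
    rw [show k.natAbs = k.toNat by omega]
  · rw [mono_y (le_of_lt hk), mono_x (by omega : (0:ℤ) ≤ -k), ← mul_pow (gY a) (gX a) (-k).toNat, gYX, ← map_pow, ← map_pow]
    rw [show k.natAbs = (-k).toNat by omega]

lemma repr_aux (B : B1) :
    ∃ (s : Finset ℤ) (b : ℤ → L), gp a B = ∑ k ∈ s, gp a (ih (b k)) * gp a (mono k) := by
  classical
  induction B using MvPolynomial.induction_on with
  | C q =>
    refine ⟨{0}, fun _ => q, ?_⟩
    rw [Finset.sum_singleton]
    have hm : gp a (mono 0) = 1 := by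
      unfold mono; norm_num
    rw [hm, mul_one ((gp a) (ih q))]; rfl
  | add p r hp hr =>
    obtain ⟨s1, b1, h1⟩ := hp
    obtain ⟨s2, b2, h2⟩ := hr
    refine ⟨s1 ∪ s2, fun k => (if k ∈ s1 then b1 k else 0) + (if k ∈ s2 then b2 k else 0), ?_⟩
    have e1 : (∑ k ∈ s1 ∪ s2, gp a (ih (if k ∈ s1 then b1 k else 0)) * gp a (mono k))
        = ∑ k ∈ s1, gp a (ih (b1 k)) * gp a (mono k) := by
      rw [← Finset.sum_subset Finset.subset_union_left
        (fun k _ hk => by rw [if_neg hk, RingHom.map_zero ih, RingHom.map_zero (gp a),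
          zero_mul ((gp a) (mono k))])]
      exact Finset.sum_congr rfl fun k hk => by rw [if_pos hk]
    have e2 : (∑ k ∈ s1 ∪ s2, gp a (ih (if k ∈ s2 then b2 k else 0)) * gp a (mono k))
        = ∑ k ∈ s2, gp a (ih (b2 k)) * gp a (mono k) := by
      rw [← Finset.sum_subset Finset.subset_union_right
        (fun k _ hk => by rw [if_neg hk, RingHom.map_zero ih, RingHom.map_zero (gp a),
          zero_mul ((gp a) (mono k))])]
      exact Finset.sum_congr rfl fun k hk => by rw [if_pos hk]
    rw [map_add, h1, h2, ← e1, ← e2, ← Finset.sum_add_distrib]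
    exact Finset.sum_congr rfl fun k _ => by rw [map_add, map_add, add_mul]
  | mul_X p i hp =>
    obtain ⟨s, b, h⟩ := hp
    fin_cases i
    · refine ⟨s.image (· + 1), fun j => b (j - 1) * (if j - 1 < 0 then a else 1), ?_⟩
      have hgx : gp a (MvPolynomial.X 0) = gX a := rfl
      simp only [Fin.mk_zero, Fin.isValue]
      rw [map_mul, h, hgx, Finset.sum_mul]
      rw [Finset.sum_image (by intro x _ y _ hxy; beta_reduce at hxy; omega)]
      apply Finset.sum_congr rfl
      intro k _
      simp only [add_sub_cancel_right]
      rw [mul_assoc ((gp a) (ih (b k))) ((gp a) (mono k)) (gX a), MX k, map_mul ih, map_mul (gp a)]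
      ring
    · refine ⟨s.image (· - 1), fun j => b (j + 1) * (if 0 < j + 1 then a else 1), ?_⟩
      have hgy : gp a (MvPolynomial.X 1) = gY a := rfl
      simp only [Fin.mk_one, Fin.isValue]
      rw [map_mul, h, hgy, Finset.sum_mul]
      rw [Finset.sum_image (by intro x _ y _ hxy; beta_reduce at hxy; omega)]
      apply Finset.sum_congr rfl
      intro k _
      simp only [sub_add_cancel]
      rw [mul_assoc ((gp a) (ih (b k))) ((gp a) (mono k)) (gY a), MY k, map_mul ih, map_mul (gp a)]
      ring

end Struct2

section Bracket3
variable {a : L} {β : GW a → GW a → GW a} (hβ : IsGWBracket a β)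
include hβ

lemma bmono (k : ℤ) : β (gp a (mono k)) (gH a) = ε a (k:ℂ) * (gH a * gp a (mono k)) := by
  rcases le_or_gt 0 k with hk | hk
  · have hc : ((k.toNat:ℕ):ℂ) = ((k:ℤ):ℂ) := by
      rw [← Int.cast_natCast, Int.toNat_of_nonneg hk]
    rw [mono_x hk, bxpow hβ, hc]
  · have hc : (((-k).toNat:ℕ):ℂ) = -((k:ℤ):ℂ) := by
      rw [← Int.cast_natCast, Int.toNat_of_nonneg (by omega : (0:ℤ) ≤ -k)]
      push_cast; ring
    have hneg : ε a (-((k:ℤ):ℂ)) = - ε a ((k:ℤ):ℂ) := by unfold ε; rw [← map_neg]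
    rw [mono_y (le_of_lt hk), bypow hβ, hc, hneg]
    ring

lemma bterm (b : L) (k : ℤ) :
    β (gp a (ih b) * gp a (mono k)) (gH a)
      = ε a (k:ℂ) * (gH a * (gp a (ih b) * gp a (mono k))) := by
  rw [bleib hβ, bmono hβ k, bqh hβ b]
  ring

lemma extract (I : Ideal (GW a)) (hcl : ∀ c ∈ I, ∀ r : GW a, β c r ∈ I) :
    ∀ (s : Finset ℤ) (b : ℤ → L), (∑ k ∈ s, gp a (ih (b k)) * gp a (mono k)) ∈ I →
    ∀ k₁ ∈ s, gp a (ih (b k₁)) * gp a (mono k₁) ∈ I := by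
  classical
  intro s
  induction s using Finset.strongInduction with
  | _ s ihs =>
    intro b hsum k₁ hk₁
    by_cases hone : ∀ k ∈ s, k = k₁
    · have hs : s = {k₁} := Finset.eq_singleton_iff_unique_mem.mpr ⟨hk₁, hone⟩
      rw [hs, Finset.sum_singleton] at hsum
      exact hsum
    · push_neg at hone
      obtain ⟨k₀, hk₀s, hk₀⟩ := hone
      set u := ∑ k ∈ s, gp a (ih (b k)) * gp a (mono k) with hu
      have h1 : β u (gH a) ∈ I := hcl u hsum (gH a)
      have h2 : gHp a (-1) * β u (gH a) - ε a ((k₀:ℤ):ℂ) * u ∈ I :=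
        I.sub_mem (I.mul_mem_left _ h1) (I.mul_mem_left _ hsum)
      have hH1 : gHp a (-1) * gH a = 1 := by rw [gH_eq]; exact gHp_cancel 1
      have h3 : gHp a (-1) * β u (gH a) - ε a ((k₀:ℤ):ℂ) * u
          = ∑ k ∈ s.erase k₀,
              gp a (ih (C (((k:ℤ):ℂ) - ((k₀:ℤ):ℂ)) * b k)) * gp a (mono k) := by
        have hvan : ∀ x ∈ s, x ∉ s.erase k₀ →
            gp a (ih (C (((x:ℤ):ℂ) - ((k₀:ℤ):ℂ)) * b x)) * gp a (mono x) = 0 := by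
          intro x hxs hxe
          have : x = k₀ := by
            by_contra hne
            exact hxe (Finset.mem_erase.mpr ⟨hne, hxs⟩)
          subst this
          rw [sub_self, map_zero, zero_mul, RingHom.map_zero ih, RingHom.map_zero (gp a),
            zero_mul ((gp a) (mono x))]
        rw [Finset.sum_subset (Finset.erase_subset k₀ s) hvan]
        rw [hu, bsum hβ, Finset.mul_sum, Finset.mul_sum, ← Finset.sum_sub_distrib]
        apply Finset.sum_congr rfl
        intro k _
        rw [bterm hβ]
        have he1 : gp a (ih (C (((k:ℤ):ℂ) - ((k₀:ℤ):ℂ)) * b k))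
            = ε a (((k:ℤ):ℂ) - ((k₀:ℤ):ℂ)) * gp a (ih (b k)) := by
          rw [map_mul ih, map_mul (gp a), eps_eq]
        have he2 : ε a (((k:ℤ):ℂ) - ((k₀:ℤ):ℂ)) = ε a ((k:ℤ):ℂ) - ε a ((k₀:ℤ):ℂ) := by
          unfold ε; rw [map_sub]
        rw [he1, he2]
        have hc := hH1
        linear_combination
          (ε a ((k:ℤ):ℂ) * (gp a (ih (b k)) * gp a (mono k))) * hc
      have h4 := ihs (s.erase k₀) (Finset.erase_ssubset hk₀s)
        (fun k => C (((k:ℤ):ℂ) - ((k₀:ℤ):ℂ)) * b k) (by rw [← h3]; exact h2) k₁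
        (Finset.mem_erase.mpr ⟨fun h => hk₀ (h ▸ rfl), hk₁⟩)
      have hne : (((k₁:ℤ):ℂ) - ((k₀:ℤ):ℂ)) ≠ 0 := by
        intro h
        have : ((k₁:ℤ):ℂ) = ((k₀:ℤ):ℂ) := by linear_combination h
        have : k₁ = k₀ := by exact_mod_cast this
        exact hk₀ this.symm
      have h5 : gp a (ih (C (((k₁:ℤ):ℂ) - ((k₀:ℤ):ℂ)) * b k₁)) * gp a (mono k₁)
          = ε a (((k₁:ℤ):ℂ) - ((k₀:ℤ):ℂ)) * (gp a (ih (b k₁)) * gp a (mono k₁)) := by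
        rw [map_mul ih, map_mul (gp a), eps_eq]; ring
      rw [h5] at h4
      have h6 := I.mul_mem_left (ε a ((((k₁:ℤ):ℂ) - ((k₀:ℤ):ℂ))⁻¹)) h4
      have h7 : ε a ((((k₁:ℤ):ℂ) - ((k₀:ℤ):ℂ))⁻¹)
            * (ε a (((k₁:ℤ):ℂ) - ((k₀:ℤ):ℂ)) * (gp a (ih (b k₁)) * gp a (mono k₁)))
          = gp a (ih (b k₁)) * gp a (mono k₁) := by
        unfold ε
        have hid : (algebraMap ℂ (GW a)) ((((k₁:ℤ):ℂ) - ((k₀:ℤ):ℂ))⁻¹)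
            * (algebraMap ℂ (GW a)) (((k₁:ℤ):ℂ) - ((k₀:ℤ):ℂ)) = 1 := by
          rw [← map_mul, inv_mul_cancel₀ hne, map_one]
        linear_combination (gp a (ih (b k₁)) * gp a (mono k₁)) * hid
      rw [h7] at h6
      exact h6

end Bracket3

section Reduce
variable {a : L} {β : GW a → GW a → GW a} (hβ : IsGWBracket a β)
  {I : Ideal (GW a)} (hcl : ∀ c ∈ I, ∀ r : GW a, β c r ∈ I)
include hβ hcl

lemma cl1 (q : L) (hq : gp a (ih q) ∈ I) : gp a (ih (lderiv q * a * T 1)) ∈ I := by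
  have h1 : β (gp a (ih q)) (gX a) ∈ I := hcl _ hq _
  rw [bqx hβ] at h1
  haveI : I.IsTwoSided := @Ideal.instIsTwoSided (GW a) _ I
  have h2 := I.mul_mem_right (gY a) (I.neg_mem h1)
  have hH : gp a (ih (T 1)) = gH a := rfl
  have h3 : -(-(gp a (ih (lderiv q)) * (gH a * gX a))) * gY a
      = gp a (ih (lderiv q * a * T 1)) := by
    rw [map_mul ih, map_mul ih, map_mul (gp a), map_mul (gp a), hH]
    linear_combination (gp a (ih (lderiv q)) * gH a) * (gXY (a := a))
  rw [h3] at h2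
  exact h2

lemma cl2 (q : L) (hq : gp a (ih q) ∈ I) :
    gp a (ih (lderiv q * lderiv a * T 2 + lderiv (lderiv q) * a * T 2 + lderiv q * a * T 1)) ∈ I := by
  have h1 : β (gp a (ih q)) (gX a) ∈ I := hcl _ hq _
  have h2 : β (β (gp a (ih q)) (gX a)) (gY a) ∈ I := hcl _ h1 _
  rw [bqx hβ] at h2
  have hH : gp a (ih (T 1)) = gH a := rfl
  -- compute the bracket
  have hXY : β (gX a) (gY a) = gp a (ih (lderiv a)) * gH a := by
    rw [bskew hβ, hβ.2.2.2]; ring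
  have hHY : β (gH a) (gY a) = gH a * gY a := by
    have := bqy hβ (T 1)
    rw [← hH, this]
    have h1' : lderiv (T 1) = 1 := by
      rw [lderiv_T]; norm_num
    rw [h1', map_one, map_one, one_mul (gH a * gY a), hH]
  have hDY := bqy hβ (lderiv q)
  have e1 : β (-(gp a (ih (lderiv q)) * (gH a * gX a))) (gY a)
      = -(gp a (ih (lderiv q)) * β (gH a * gX a) (gY a)
          + β (gp a (ih (lderiv q))) (gY a) * (gH a * gX a)) := by
    rw [bneg hβ, bleib hβ]
  have e2 : β (gH a * gX a) (gY a)
      = gH a * (gp a (ih (lderiv a)) * gH a) + (gH a * gY a) * gX a := by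
    rw [bleib hβ, hXY, hHY]
  rw [e1, e2, hDY] at h2
  have e3 : -(gp a (ih (lderiv q)) * (gH a * (gp a (ih (lderiv a)) * gH a) + gH a * gY a * gX a)
        + gp a (ih (lderiv (lderiv q))) * (gH a * gY a) * (gH a * gX a))
      = -(gp a (ih (lderiv q * lderiv a * T 2 + lderiv (lderiv q) * a * T 2
          + lderiv q * a * T 1))) := by
    rw [map_add ih, map_add ih, map_add (gp a), map_add (gp a)]
    rw [map_mul ih (lderiv q * lderiv a) (T 2), map_mul ih (lderiv q) (lderiv a),
      map_mul ih (lderiv (lderiv q) * a) (T 2), map_mul ih (lderiv (lderiv q)) a,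
      map_mul ih (lderiv q * a) (T 1), map_mul ih (lderiv q) a]
    rw [map_mul (gp a), map_mul (gp a), map_mul (gp a), map_mul (gp a), map_mul (gp a),
      map_mul (gp a)]
    rw [hH]
    have hT2 : gp a (ih (T 2)) = gH a * gH a := by
      rw [show (2:ℤ) = 1 + 1 by norm_num, T_add, map_mul ih, map_mul (gp a), hH]
    rw [hT2]
    linear_combination (-(gp a (ih (lderiv q)) * gH a) - gp a (ih (lderiv (lderiv q))) * gH a * gH a) * (gYX (a := a))
  rw [e3] at h2
  have := I.neg_mem h2
  rw [neg_neg] at this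
  exact this

lemma stephom (ha : a ≠ 0) (hne : I ≠ ⊥) : ∃ p : L, p ≠ 0 ∧ gp a (ih p) ∈ I := by
  obtain ⟨u, huI, hu0⟩ := Submodule.exists_mem_ne_zero_of_ne_bot hne
  obtain ⟨B, hB⟩ := Ideal.Quotient.mk_surjective u
  have hB' : gp a B = u := hB
  obtain ⟨s, b, hrepr⟩ := repr_aux (a := a) B
  rw [hB'] at hrepr
  have hterm := extract hβ I hcl s b (by rw [← hrepr]; exact huI)
  have hex : ∃ k ∈ s, gp a (ih (b k)) * gp a (mono k) ≠ 0 := by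
    by_contra h
    push_neg at h
    exact hu0 (by rw [hrepr]; exact Finset.sum_eq_zero h)
  obtain ⟨k, hks, ht0⟩ := hex
  have htI := hterm k hks
  have hbk : b k ≠ 0 := by
    intro h
    exact ht0 (by rw [h, RingHom.map_zero ih, RingHom.map_zero (gp a),
      zero_mul ((gp a) (mono k))])
  refine ⟨b k * a ^ k.natAbs, mul_ne_zero hbk (pow_ne_zero _ ha), ?_⟩
  haveI : I.IsTwoSided := @Ideal.instIsTwoSided (GW a) _ I
  have h1 := I.mul_mem_right (gp a (mono (-k))) htI
  rw [mul_assoc ((gp a) (ih (b k))) ((gp a) (mono k)) ((gp a) (mono (-k))), monoprod k,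
    ← map_mul (gp a), ← map_mul ih] at h1
  exact h1

end Reduce

section PolyEnd
open Polynomial

/-- strip the `X`-power -/
lemma strip (P : ℂ[X]) (hP : P ≠ 0) : ∃ (k : ℕ) (Q : ℂ[X]), P = X ^ k * Q ∧ ¬ (X : ℂ[X]) ∣ Q := by
  obtain ⟨Q, hQ, hnd⟩ := P.exists_eq_pow_rootMultiplicity_mul_and_not_dvd hP 0
  refine ⟨rootMultiplicity 0 P, Q, ?_, ?_⟩
  · simpa using hQ
  · simpa using hnd

lemma aform {a : L} (ha : a ≠ 0) :
    ∃ (d : ℤ) (A : ℂ[X]), a = toLaurent A * T (-d) ∧ ¬ (X : ℂ[X]) ∣ A ∧ A ≠ 0 := by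
  obtain ⟨n, A₀, hA₀⟩ := a.exists_T_pow
  have hA₀0 : A₀ ≠ 0 := by
    intro h
    apply ha
    have h2 : a * T (n:ℤ) = 0 := by rw [← hA₀, h, map_zero]
    have h3 := congrArg (fun t => t * T (-(n:ℤ))) h2
    simpa using h3
  obtain ⟨k, A, hstrip, hXA⟩ := strip A₀ hA₀0
  refine ⟨(n : ℤ) - (k : ℤ), A, ?_, hXA, ?_⟩
  · have h1 : toLaurent A₀ = T (k:ℤ) * toLaurent A := by
      rw [hstrip, map_mul, Polynomial.toLaurent_X_pow]
    have h2 : a = toLaurent A₀ * T (-(n:ℤ)) := by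
      rw [hA₀, mul_T_assoc]
      norm_num
    rw [h2, h1, mul_comm (T (k:ℤ)) (toLaurent A), mul_T_assoc]
    congr 1
    ring
  · intro h
    rw [h, mul_zero] at hstrip
    exact hA₀0 hstrip

lemma lderiv_shift {a : L} (d : ℤ) (A : ℂ[X]) (hA : a = toLaurent A * T (-d)) :
    lderiv a = toLaurent (X * derivative A - Polynomial.C (d:ℂ) * A) * T (-d - 1) := by
  rw [hA, lderiv_mul_T, lderiv_toLaurent]
  have hT : (T (-d) : L) = T 1 * T (-d - 1) := by rw [← T_add]; ring_nf
  have hC : (LaurentPolynomial.C (((-d):ℤ):ℂ) : L) = -LaurentPolynomial.C ((d:ℂ)) := by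
    have hcast : ((-d : ℤ):ℂ) = -((d:ℤ):ℂ) := by push_cast; ring
    rw [hcast, map_neg]
  rw [map_sub, map_mul, map_mul, Polynomial.toLaurent_X, Polynomial.toLaurent_C]
  linear_combination (toLaurent (derivative A)) * hT + (toLaurent A * T (-d - 1)) * hC

lemma simple_poly {a : L} (hsimple : Ideal.span {a, lderiv a} = (⊤ : Ideal L))
    (d : ℤ) (A : ℂ[X]) (hA : a = toLaurent A * T (-d)) :
    ∀ lam : ℂ, lam ≠ 0 → A.IsRoot lam → ¬ (derivative A).IsRoot lam := by
  intro lam hlam hAr hA'r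
  simp only [Polynomial.IsRoot] at hAr hA'r
  have h1 : (1 : L) ∈ Ideal.span {a, lderiv a} := by rw [hsimple]; trivial
  rw [Ideal.mem_span_pair] at h1
  obtain ⟨u, v, huv⟩ := h1
  set A₁ : ℂ[X] := X * derivative A - Polynomial.C (d:ℂ) * A with hA₁def
  have hda : lderiv a = toLaurent A₁ * T (-d - 1) := by
    rw [hA₁def]; exact lderiv_shift d A hA
  obtain ⟨nu, U, hU⟩ := u.exists_T_pow
  obtain ⟨nv, V, hV⟩ := v.exists_T_pow
  set M : ℤ := (nu : ℤ) + (nv : ℤ) + d.natAbs + 1 with hM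
  have htlA : toLaurent A = a * T d := by rw [hA, mul_T_assoc]; norm_num
  have htlA₁ : toLaurent A₁ = lderiv a * T (d + 1) := by rw [hda, mul_T_assoc]; norm_num
  have hu' : toLaurent U = u * T (nu:ℤ) := hU
  have hv' : toLaurent V = v * T (nv:ℤ) := hV
  have key : toLaurent (U * A * X ^ (M - nu - d).toNat + V * A₁ * X ^ (M - nv - d - 1).toNat)
      = toLaurent ((X : ℂ[X]) ^ M.toNat) := by
    rw [map_add, map_mul, map_mul, map_mul, map_mul, Polynomial.toLaurent_X_pow,
      Polynomial.toLaurent_X_pow, Polynomial.toLaurent_X_pow]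
    rw [hu', hv', htlA, htlA₁]
    rw [show ((M - nu - d).toNat : ℤ) = M - nu - d by omega,
      show ((M - nv - d - 1).toNat : ℤ) = M - nv - d - 1 by omega,
      show ((M.toNat : ℤ)) = M by omega]
    calc u * T (nu:ℤ) * (a * T d) * T (M - nu - d)
          + v * T (nv:ℤ) * (lderiv a * T (d+1)) * T (M - nv - d - 1)
        = (u * a) * (T (nu:ℤ) * T d * T (M - nu - d))
          + (v * lderiv a) * (T (nv:ℤ) * T (d+1) * T (M - nv - d - 1)) := by ring
      _ = (u * a) * T M + (v * lderiv a) * T M := by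
          rw [← T_add, ← T_add, ← T_add, ← T_add,
            show (nu:ℤ) + d + (M - nu - d) = M by ring,
            show (nv:ℤ) + (d+1) + (M - nv - d - 1) = M by ring]
      _ = T M := by rw [← add_mul, huv, one_mul (T M)]
  have hpoly := Polynomial.toLaurent_injective key
  have heval := congrArg (Polynomial.eval lam) hpoly
  have hA₁0 : Polynomial.eval lam A₁ = 0 := by
    rw [hA₁def]
    simp [hAr, hA'r]
  rw [Polynomial.eval_add, Polynomial.eval_mul, Polynomial.eval_mul, Polynomial.eval_mul,
    Polynomial.eval_mul, Polynomial.eval_pow, Polynomial.eval_pow, Polynomial.eval_pow,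
    Polynomial.eval_X, hAr, hA₁0] at heval
  simp only [mul_zero, zero_mul, add_zero, zero_add] at heval
  -- heval : 0 = lam ^ M.toNat
  have hM0 : M.toNat ≠ 0 := by omega
  exact hlam (pow_eq_zero_iff hM0 |>.mp heval.symm)

end PolyEnd

section KeyLemma
open Polynomial

lemma keylemma (g A : ℂ[X]) (hg0 : g ≠ 0) (hXg : ¬ (X : ℂ[X]) ∣ g) (hA0 : A ≠ 0)
    (hsq : ∀ lam : ℂ, lam ≠ 0 → A.IsRoot lam → ¬ (derivative A).IsRoot lam)
    (h1 : g ∣ derivative g * A) (h2 : g ∣ derivative (derivative g * A)) : IsUnit g := by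
  by_contra hu
  have hdeg : g.degree ≠ 0 := fun h => hu (isUnit_iff_degree_eq_zero.mpr h)
  obtain ⟨lam, hlam⟩ := IsAlgClosed.exists_root g hdeg
  have hlam0 : lam ≠ 0 := by
    intro h
    apply hXg
    subst h
    rw [Polynomial.X_dvd_iff, Polynomial.coeff_zero_eq_eval_zero]
    exact hlam
  set m := rootMultiplicity lam g with hm
  have hm1 : 1 ≤ m := (rootMultiplicity_pos hg0).mpr hlam
  have hg' : derivative g ≠ 0 := by
    intro h
    obtain ⟨c, hc⟩ := Polynomial.natDegree_eq_zero.mp (natDegree_eq_zero_of_derivative_eq_zero h)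
    apply hu
    rw [← hc]
    apply Polynomial.isUnit_C.mpr
    apply isUnit_iff_ne_zero.mpr
    intro hc0
    exact hg0 (by rw [← hc, hc0, map_zero])
  have hmd : rootMultiplicity lam (derivative g) = m - 1 :=
    derivative_rootMultiplicity_of_root hlam
  have hgA : derivative g * A ≠ 0 := mul_ne_zero hg' hA0
  have hdvd_le : ∀ p q : ℂ[X], q ≠ 0 → p ∣ q →
      rootMultiplicity lam p ≤ rootMultiplicity lam q := by
    rintro p q hq ⟨c, rfl⟩
    rw [rootMultiplicity_mul hq]
    exact Nat.le_add_right _ _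
  have hmul : rootMultiplicity lam (derivative g * A)
      = (m - 1) + rootMultiplicity lam A := by
    rw [rootMultiplicity_mul hgA, hmd]
  have hAroot : A.IsRoot lam := by
    by_contra hAr
    have hmA : rootMultiplicity lam A = 0 := rootMultiplicity_eq_zero hAr
    have hle := hdvd_le g _ hgA h1
    rw [hmul, hmA] at hle
    omega
  have hA'root : ¬ (derivative A).IsRoot lam := hsq lam hlam0 hAroot
  have hmA1 : rootMultiplicity lam A = 1 := by
    have hpos : 1 ≤ rootMultiplicity lam A := (rootMultiplicity_pos hA0).mpr hAroot
    by_contra hne1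
    have h2le : (X - Polynomial.C lam)^2 ∣ A :=
      dvd_trans (pow_dvd_pow _ (by omega)) (pow_rootMultiplicity_dvd A lam)
    obtain ⟨B, hB⟩ := h2le
    apply hA'root
    have : derivative A = (X - Polynomial.C lam) *
        (2 * B + (X - Polynomial.C lam) * derivative B) := by
      rw [hB]
      rw [derivative_mul, derivative_pow, derivative_sub, derivative_X, derivative_C]
      push_cast
      simp only [map_ofNat]
      ring
    rw [Polynomial.IsRoot, this]
    simp
  have hgam : rootMultiplicity lam (derivative g * A) = m := by rw [hmul, hmA1]; omega
  have hroot' : (derivative g * A).IsRoot lam := by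
    apply (rootMultiplicity_pos hgA).mp
    omega
  have hD0 : derivative (derivative g * A) ≠ 0 := by
    intro h0
    obtain ⟨c, hc⟩ := Polynomial.natDegree_eq_zero.mp (natDegree_eq_zero_of_derivative_eq_zero h0)
    rw [← hc] at hroot'
    have : c = 0 := by simpa [Polynomial.IsRoot] using hroot'
    rw [this, map_zero] at hc
    exact hgA hc.symm
  have hmd2 : rootMultiplicity lam (derivative (derivative g * A)) = m - 1 := by
    rw [derivative_rootMultiplicity_of_root hroot', hgam]
  have hle2 := hdvd_le g _ hD0 h2
  rw [hmd2] at hle2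
  omega

end KeyLemma
end Aux


open Polynomial

/-- If every root of the Laurent polynomial `a` is simple
(equivalently, `a` and `a'` generate the unit ideal of `ℂ[h^{±1}]`), then the
Poisson generalized Weyl algebra `A₁` is Poisson simple. -/
theorem GW_poisson_simple (a : L) (ha : a ≠ 0) (hnu : ¬ IsUnit a)
    (β : GW a → GW a → GW a) (hβ : IsGWBracket a β)
    (hsimple : Ideal.span {a, lderiv a} = (⊤ : Ideal L)) :
    ∀ I : Ideal (GW a), (∀ c ∈ I, ∀ r : GW a, β c r ∈ I) → I = ⊥ ∨ I = ⊤ := by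
  classical
  intro I hcl
  by_cases hbot : I = ⊥
  · exact Or.inl hbot
  right
  obtain ⟨p, hp0, hpI⟩ := Aux.stephom hβ hcl ha hbot
  set J : Ideal L := I.comap ((gp a).comp ih) with hJdef
  have hJ : ∀ q : L, q ∈ J ↔ gp a (ih q) ∈ I := fun q => Iff.rfl
  have hJmul : ∀ q ∈ J, ∀ r : L, q * r ∈ J := fun q hq r => J.mul_mem_right r hq
  have hpJ : p ∈ J := (hJ p).mpr hpI
  set K : Ideal (Polynomial ℂ) := J.comap (Polynomial.toLaurent : ℂ[X] →+* L) with hKdef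
  have hK : ∀ P : ℂ[X], P ∈ K ↔ Polynomial.toLaurent P ∈ J := fun P => Iff.rfl
  obtain ⟨g₀, hg₀⟩ := (IsPrincipalIdealRing.principal K).principal
  obtain ⟨np, Pp, hPp⟩ := p.exists_T_pow
  have hPpJ : Pp ∈ K := by
    rw [hK, hPp]
    exact hJmul p hpJ (T (np:ℤ))
  have hPp0 : Pp ≠ 0 := by
    intro h
    rw [h, map_zero] at hPp
    apply hp0
    have h3 := congrArg (fun t => t * T (-(np:ℤ))) hPp
    simpa using h3.symm
  have hg₀0 : g₀ ≠ 0 := by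
    intro h
    rw [h] at hg₀
    rw [hg₀] at hPpJ
    simp only [Ideal.submodule_span_eq, Ideal.span_singleton_eq_bot.mpr rfl,
      Ideal.mem_bot] at hPpJ
    exact hPp0 hPpJ
  obtain ⟨kg, g, hgsplit, hXg⟩ := Aux.strip g₀ hg₀0
  have hg0 : g ≠ 0 := fun h => hg₀0 (by rw [hgsplit, h, mul_zero])
  have hgJ : Polynomial.toLaurent g ∈ J := by
    have h1 : g₀ ∈ K := by rw [hg₀]; exact Ideal.subset_span rfl
    have h2 : Polynomial.toLaurent g₀ ∈ J := h1
    have h3 : Polynomial.toLaurent g = Polynomial.toLaurent g₀ * T (-(kg:ℤ)) := by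
      rw [hgsplit, map_mul, Polynomial.toLaurent_X_pow,
        mul_comm (T (kg:ℤ)) (Polynomial.toLaurent g), mul_T_assoc]
      norm_num
    rw [h3]
    exact hJmul _ h2 _
  have hdvdJ : ∀ P : ℂ[X], Polynomial.toLaurent P ∈ J → g ∣ P := by
    intro P hP
    have h1 : P ∈ K := hP
    rw [hg₀, Ideal.submodule_span_eq, Ideal.mem_span_singleton] at h1
    exact dvd_trans ⟨X ^ kg, by rw [hgsplit]; ring⟩ h1
  obtain ⟨d, A, hA, hXA, hA0⟩ := Aux.aform ha
  have hsq := Aux.simple_poly hsimple d A hA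
  -- closure 1 : g ∣ g' A
  have hq1 : gp a (ih (lderiv (Polynomial.toLaurent g) * a * T 1)) ∈ I :=
    Aux.cl1 hβ hcl _ ((hJ _).mp hgJ)
  have hq1' : Polynomial.toLaurent (derivative g * A) ∈ J := by
    have hT : (T (-d) : L) * T 1 * T (d-1) = 1 := by
      rw [← T_add, ← T_add, show -d + 1 + (d - 1) = (0:ℤ) by ring, T_zero]
    have he : lderiv (Polynomial.toLaurent g) * a * T 1 * T (d - 1)
        = Polynomial.toLaurent (derivative g * A) := by
      rw [Aux.lderiv_toLaurent, hA, map_mul]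
      linear_combination (Polynomial.toLaurent (derivative g) * Polynomial.toLaurent A) * hT
    rw [← he]
    exact hJmul _ ((hJ _).mpr hq1) _
  have hdg : g ∣ derivative g * A := hdvdJ _ hq1'
  -- closure 2
  have hq2 : gp a (ih (lderiv (Polynomial.toLaurent g) * lderiv a * T 2
      + lderiv (lderiv (Polynomial.toLaurent g)) * a * T 2
      + lderiv (Polynomial.toLaurent g) * a * T 1)) ∈ I :=
    Aux.cl2 hβ hcl _ ((hJ _).mp hgJ)
  have hq3 : lderiv (Polynomial.toLaurent g) * lderiv a * T 2
      + lderiv (lderiv (Polynomial.toLaurent g)) * a * T 2 ∈ J := by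
    have hsub := J.sub_mem ((hJ _).mpr hq2) ((hJ _).mpr hq1)
    have he : lderiv (Polynomial.toLaurent g) * lderiv a * T 2
          + lderiv (lderiv (Polynomial.toLaurent g)) * a * T 2
          + lderiv (Polynomial.toLaurent g) * a * T 1
          - lderiv (Polynomial.toLaurent g) * a * T 1
        = lderiv (Polynomial.toLaurent g) * lderiv a * T 2
          + lderiv (lderiv (Polynomial.toLaurent g)) * a * T 2 := by ring
    rw [he] at hsub
    exact hsub
  have hq3' : Polynomial.toLaurent (X * derivative (derivative g * A)
      - Polynomial.C (d:ℂ) * (derivative g * A)) ∈ J := by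
    set A₁ : ℂ[X] := X * derivative A - Polynomial.C (d:ℂ) * A with hA₁def
    have hda : lderiv a = Polynomial.toLaurent A₁ * T (-d - 1) := Aux.lderiv_shift d A hA
    have hpoly : X * derivative (derivative g * A) - Polynomial.C (d:ℂ) * (derivative g * A)
        = derivative g * A₁ + derivative (derivative g) * A * X := by
      rw [hA₁def, derivative_mul]
      ring
    have hT1 : (T (-d-1) : L) * T 2 * T (d-1) = 1 := by
      rw [← T_add, ← T_add, show -d - 1 + 2 + (d - 1) = (0:ℤ) by ring, T_zero]
    have hT2 : (T (-d) : L) * T 2 * T (d-1) = T 1 := by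
      rw [← T_add, ← T_add, show -d + 2 + (d - 1) = (1:ℤ) by ring]
    have he : (lderiv (Polynomial.toLaurent g) * lderiv a * T 2
          + lderiv (lderiv (Polynomial.toLaurent g)) * a * T 2) * T (d - 1)
        = Polynomial.toLaurent (X * derivative (derivative g * A)
            - Polynomial.C (d:ℂ) * (derivative g * A)) := by
      rw [hpoly, Aux.lderiv_toLaurent, Aux.lderiv_toLaurent, hda, hA]
      rw [map_add, map_mul, map_mul, map_mul, Polynomial.toLaurent_X]
      linear_combination (Polynomial.toLaurent (derivative g) * Polynomial.toLaurent A₁) * hT1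
        + (Polynomial.toLaurent (derivative (derivative g)) * Polynomial.toLaurent A) * hT2
    rw [← he]
    exact hJmul _ hq3 _
  have hdM : g ∣ X * derivative (derivative g * A)
      - Polynomial.C (d:ℂ) * (derivative g * A) := hdvdJ _ hq3'
  have hdXD : g ∣ (X : ℂ[X]) * derivative (derivative g * A) := by
    have he : (X : ℂ[X]) * derivative (derivative g * A)
        = (X * derivative (derivative g * A) - Polynomial.C (d:ℂ) * (derivative g * A))
          + Polynomial.C (d:ℂ) * (derivative g * A) := by ring
    rw [he]
    exact dvd_add hdM (hdg.mul_left _)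
  have hcop : IsCoprime (X : ℂ[X]) g :=
    (Polynomial.irreducible_X.coprime_iff_not_dvd).mpr hXg
  have hdD : g ∣ derivative (derivative g * A) := hcop.symm.dvd_of_dvd_mul_left hdXD
  have hunit : IsUnit g := Aux.keylemma g A hg0 hXg hA0 hsq hdg hdD
  have hunit2 : IsUnit (gp a (ih (Polynomial.toLaurent g))) := by
    have h1 : IsUnit (Polynomial.toLaurent g) := hunit.map (Polynomial.toLaurent : ℂ[X] →+* L)
    exact h1.map ((gp a).comp ih)
  exact I.eq_top_of_isUnit_mem ((hJ _).mp hgJ) hunit2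
end
end

section
/- If ψ is a Poisson endomorphism of A₁ with ψ(h) = γ ∈ ℂ* (a constant), then ψ(x) = 0, ψ(y) = 0, and γ is a common root of a(h) and a'(h), i.e., a root of a(h) of multiplicity > 1. Conversely, each such γ yields a unique zero-type Poisson endomorphism; if all roots of a(h) are simple there are no zero-type Poisson endomorphisms. -/
set_option maxHeartbeats 1000000
set_option synthInstance.maxHeartbeats 400000


/- Common setup: the Poisson generalized Weyl algebra
   `A₁ = ℂ[h^{±1},x,y]/⟨xy - a(h)⟩` with Poisson bracket
   `{x,h} = hx`, `{y,h} = -hy`, `{y,x} = -a'(h)h`. -/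

noncomputable section
open LaurentPolynomial

def eL (a : L) : L →+* GW a := (gp a).comp ih

lemma eL_C (a : L) (c : ℂ) : eL a (LaurentPolynomial.C c) = algebraMap ℂ (GW a) c := rfl

lemma gHp_mul (a : L) (n m : ℤ) : gHp a n * gHp a m = gHp a (n+m) := by
  show eL a (T n) * eL a (T m) = eL a (T (n+m))
  rw [← RingHom.map_mul (eL a) (T n) (T m), ← T_add]

lemma gHp_zero (a : L) : gHp a 0 = 1 := by
  show eL a (T 0) = 1
  rw [T_zero, RingHom.map_one (eL a)]

lemma GW_nontrivial (a : L) (hnu : ¬ IsUnit a) : Nontrivial (GW a) := by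
  refine Ideal.Quotient.nontrivial_iff.mpr ?_
  intro htop
  rw [GWI, Ideal.span_singleton_eq_top] at htop
  apply hnu
  have h1 := htop.map (MvPolynomial.eval (fun _ => (0:L)))
  have h3 : (MvPolynomial.eval (fun _ => (0:L))) (Bx * By - ih a) = -a := by
    rw [RingHom.map_sub (MvPolynomial.eval (fun _ => (0:L))) (Bx * By) (ih a),
      RingHom.map_mul (MvPolynomial.eval (fun _ => (0:L))) Bx By]
    simp [Bx, By, ih]
  rw [h3] at h1
  simpa using h1.neg

lemma gXY (a : L) : gX a * gY a = eL a a := by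
  have h0 : gp a (Bx * By) = gp a (ih a) := Ideal.Quotient.eq.2 (Ideal.subset_span rfl)
  calc gX a * gY a = gp a (Bx * By) := (RingHom.map_mul (gp a) Bx By).symm
    _ = eL a a := h0

variable {a : L}

lemma psi_hinv {ψ : GW a →ₐ[ℂ] GW a} {γ : ℂ} (hγ : γ ≠ 0)
    (hh : ψ (gH a) = algebraMap ℂ (GW a) γ) :
    ψ (gHp a (-1)) = algebraMap ℂ (GW a) γ⁻¹ := by
  have hu : algebraMap ℂ (GW a) γ⁻¹ * algebraMap ℂ (GW a) γ = 1 := by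
    rw [← RingHom.map_mul (algebraMap ℂ (GW a)) γ⁻¹ γ, inv_mul_cancel₀ hγ,
      RingHom.map_one (algebraMap ℂ (GW a))]
  have h0 : gH a * gHp a (-1) = 1 := by
    rw [show gH a = gHp a 1 from rfl, gHp_mul a 1 (-1), show (1 + -1 : ℤ) = 0 by ring,
      gHp_zero a]
  have h1 : ψ (gH a) * ψ (gHp a (-1)) = 1 := by
    rw [← map_mul ψ (gH a) (gHp a (-1)), h0, map_one ψ]
  linear_combination (algebraMap ℂ (GW a) γ⁻¹) * h1
    - (algebraMap ℂ (GW a) γ⁻¹ * ψ (gHp a (-1))) * hh - ψ (gHp a (-1)) * hu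

lemma psi_hp {ψ : GW a →ₐ[ℂ] GW a} {γ : ℂ} (hγ : γ ≠ 0)
    (hh : ψ (gH a) = algebraMap ℂ (GW a) γ) (n : ℤ) :
    ψ (gHp a n) = algebraMap ℂ (GW a) (γ ^ n) := by
  induction n using Int.induction_on with
  | zero => rw [gHp_zero a, map_one ψ, zpow_zero, RingHom.map_one (algebraMap ℂ (GW a))]
  | succ k ihk =>
      rw [← gHp_mul a k 1, map_mul ψ (gHp a k) (gHp a 1), ihk,
        show gHp a 1 = gH a from rfl, hh,
        ← RingHom.map_mul (algebraMap ℂ (GW a)) (γ ^ (k:ℤ)) γ, ← zpow_add_one₀ hγ]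
  | pred k ihk =>
      rw [show (-(k:ℤ) - 1) = -(k:ℤ) + (-1) by ring, ← gHp_mul a (-k) (-1),
        map_mul ψ (gHp a (-k)) (gHp a (-1)), ihk, psi_hinv hγ hh,
        ← RingHom.map_mul (algebraMap ℂ (GW a)) (γ ^ (-(k:ℤ))) γ⁻¹,
        show γ ^ (-(k:ℤ)) * γ⁻¹ = γ ^ (-(k:ℤ) + -1) by
          rw [show (-(k:ℤ) + -1) = -(k:ℤ) - 1 by ring, zpow_sub_one₀ hγ]]

lemma psi_eval {ψ : GW a →ₐ[ℂ] GW a} {γ : ℂ} (hγ : γ ≠ 0)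
    (hh : ψ (gH a) = algebraMap ℂ (GW a) γ) (p : L) :
    ψ (eL a p) = algebraMap ℂ (GW a) (leval γ p) := by
  have hd : eL a p = Finsupp.sum p.coeff (fun n c => eL a (LaurentPolynomial.C c * T n)) := by
    conv_lhs => rw [← AddMonoidAlgebra.sum_coeff_single p]
    exact (map_finsuppSum (eL a) p.coeff AddMonoidAlgebra.single).trans
      (Finsupp.sum_congr (fun n _ => by rw [single_eq_C_mul_T]))
  calc ψ (eL a p) = ψ (Finsupp.sum p.coeff fun n c => eL a (LaurentPolynomial.C c * T n)) := by
        rw [hd]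
    _ = Finsupp.sum p.coeff (fun n c => ψ (eL a (LaurentPolynomial.C c * T n))) :=
        map_finsuppSum ψ p.coeff _
    _ = Finsupp.sum p.coeff (fun n c => algebraMap ℂ (GW a) (c * γ ^ n)) :=
        Finsupp.sum_congr (fun n _ => by
          rw [RingHom.map_mul (eL a) (LaurentPolynomial.C (p.coeff n)) (T n),
            map_mul ψ (eL a (LaurentPolynomial.C (p.coeff n))) (eL a (T n)),
            show (eL a) (T n) = gHp a n from rfl, psi_hp hγ hh n,
            show ψ ((eL a) (LaurentPolynomial.C (p.coeff n))) = ψ (algebraMap ℂ (GW a) (p.coeff n)) from rfl,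
            ψ.commutes (p.coeff n), ← RingHom.map_mul (algebraMap ℂ (GW a)) (p.coeff n) (γ ^ n)])
    _ = algebraMap ℂ (GW a) (Finsupp.sum p.coeff fun n c => c * γ ^ n) :=
        (map_finsuppSum (algebraMap ℂ (GW a)) p.coeff _).symm
    _ = algebraMap ℂ (GW a) (leval γ p) := rfl

section eval
variable (γ : ℂ) (hγ : γ ≠ 0)

def evA (γ : ℂ) (hγ : γ ≠ 0) : L →ₐ[ℂ] ℂ :=
  AddMonoidAlgebra.lift ℂ ℂ ℤ ((Units.coeHom ℂ).comp (zpowersHom ℂˣ (Units.mk0 γ hγ)))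

lemma evA_single (n : ℤ) (c : ℂ) : evA γ hγ (AddMonoidAlgebra.single n c) = c * γ ^ n := by
  unfold evA
  rw [AddMonoidAlgebra.lift_single]
  simp [Units.smul_def]

lemma evA_eq (p : L) : evA γ hγ p = leval γ p := by
  conv_lhs => rw [← AddMonoidAlgebra.sum_coeff_single p]
  exact (map_finsuppSum (evA γ hγ) p.coeff AddMonoidAlgebra.single).trans
    (Finsupp.sum_congr fun n _ => evA_single γ hγ n (p.coeff n))

end eval

section construct
variable (a : L) (γ : ℂ) (hγ : γ ≠ 0)

def fL (γ : ℂ) (hγ : γ ≠ 0) (a : L) : L →+* GW a :=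
  (algebraMap ℂ (GW a)).comp (evA γ hγ).toRingHom

def PsiB (a : L) (γ : ℂ) (hγ : γ ≠ 0) : B1 →+* GW a :=
  MvPolynomial.eval₂Hom (fL γ hγ a) (fun _ => (0 : GW a))

lemma PsiB_commutes (r : ℂ) : PsiB a γ hγ (algebraMap ℂ B1 r) = algebraMap ℂ (GW a) r := by
  have h1 : (algebraMap ℂ B1) r = MvPolynomial.C (algebraMap ℂ L r) := rfl
  rw [h1, PsiB, MvPolynomial.eval₂Hom_C]
  show algebraMap ℂ (GW a) ((evA γ hγ) (algebraMap ℂ L r)) = algebraMap ℂ (GW a) r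
  rw [AlgHom.commutes (evA γ hγ) r, Algebra.algebraMap_self_apply r]

def PsiA (a : L) (γ : ℂ) (hγ : γ ≠ 0) : B1 →ₐ[ℂ] GW a :=
  { PsiB a γ hγ with commutes' := PsiB_commutes a γ hγ }

lemma PsiA_vanish (ha0 : leval γ a = 0) : ∀ b ∈ GWI a, PsiA a γ hγ b = 0 := by
  intro b hb
  obtain ⟨z, hz⟩ := Ideal.mem_span_singleton'.mp hb
  have hgen : PsiB a γ hγ (Bx * By - ih a) = 0 := by
    rw [RingHom.map_sub (PsiB a γ hγ) (Bx * By) (ih a),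
      RingHom.map_mul (PsiB a γ hγ) Bx By]
    have hx : PsiB a γ hγ Bx = 0 := by
      rw [Bx, PsiB]; exact MvPolynomial.eval₂Hom_X' _ _ _
    have hc : PsiB a γ hγ (ih a) = algebraMap ℂ (GW a) (leval γ a) := by
      rw [ih, PsiB, MvPolynomial.eval₂Hom_C]
      show algebraMap ℂ (GW a) ((evA γ hγ) a) = _
      rw [evA_eq γ hγ a]
    rw [hx, hc, ha0, RingHom.map_zero (algebraMap ℂ (GW a))]
    ring
  show PsiB a γ hγ b = 0
  rw [← hz, RingHom.map_mul (PsiB a γ hγ) z (Bx * By - ih a), hgen]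
  ring

def psiGW (a : L) (γ : ℂ) (hγ : γ ≠ 0) (ha0 : leval γ a = 0) : GW a →ₐ[ℂ] GW a :=
  Ideal.Quotient.liftₐ (GWI a) (PsiA a γ hγ) (PsiA_vanish a γ hγ ha0)

lemma psiGW_mk (ha0 : leval γ a = 0) (b : B1) :
    psiGW a γ hγ ha0 (gp a b) = PsiB a γ hγ b :=
  Ideal.Quotient.lift_mk (GWI a) _ _

lemma psiGW_H (ha0 : leval γ a = 0) : psiGW a γ hγ ha0 (gH a) = algebraMap ℂ (GW a) γ := by
  rw [gH, psiGW_mk a γ hγ ha0 Bh, Bh, ih, PsiB, MvPolynomial.eval₂Hom_C]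
  show algebraMap ℂ (GW a) ((evA γ hγ) (T 1)) = _
  rw [evA_eq γ hγ (T 1)]
  congr 1
  rw [_root_.leval]
  show (Finsupp.single (1:ℤ) (1:ℂ)).sum (fun n c => c * γ ^ n) = γ
  rw [Finsupp.sum_single_index]
  · simp
  · simp

lemma psiGW_X (ha0 : leval γ a = 0) : psiGW a γ hγ ha0 (gX a) = 0 := by
  rw [gX, psiGW_mk a γ hγ ha0 Bx, Bx, PsiB]
  exact MvPolynomial.eval₂Hom_X' _ _ _

lemma psiGW_Y (ha0 : leval γ a = 0) : psiGW a γ hγ ha0 (gY a) = 0 := by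
  rw [gY, psiGW_mk a γ hγ ha0 By, By, PsiB]
  exact MvPolynomial.eval₂Hom_X' _ _ _

end construct

lemma gen_ind (a : L) (P : GW a → Prop)
    (halg : ∀ r : ℂ, P (algebraMap ℂ (GW a) r))
    (hadd : ∀ u v, P u → P v → P (u + v))
    (hmul : ∀ u v, P u → P v → P (u * v))
    (hH : P (gH a)) (hHm : P (gHp a (-1))) (hX : P (gX a)) (hY : P (gY a)) :
    ∀ u, P u := by
  have hone : P 1 := by
    have := halg 1
    rwa [RingHom.map_one (algebraMap ℂ (GW a))] at this
  have hzero : P 0 := by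
    have := halg 0
    rwa [RingHom.map_zero (algebraMap ℂ (GW a))] at this
  have hHp : ∀ n : ℤ, P (gHp a n) := by
    intro n
    induction n using Int.induction_on with
    | zero => rw [gHp_zero a]; exact hone
    | succ k ihk => rw [← gHp_mul a k 1]; exact hmul _ _ ihk hH
    | pred k ihk =>
        rw [show (-(k:ℤ) - 1) = -(k:ℤ) + (-1) by ring, ← gHp_mul a (-k) (-1)]
        exact hmul _ _ ihk hHm
  have hL : ∀ p : L, P (eL a p) := by
    intro p
    induction p using AddMonoidAlgebra.induction_linear with
    | zero =>
        have : eL a 0 = 0 := RingHom.map_zero (eL a)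
        rw [this]; exact hzero
    | add f g hf hg =>
        rw [RingHom.map_add (eL a) f g]; exact hadd _ _ hf hg
    | single n c =>
        have h2 : (AddMonoidAlgebra.single n c : L) = LaurentPolynomial.C c * T n := single_eq_C_mul_T c n
        rw [h2, RingHom.map_mul (eL a) (LaurentPolynomial.C c) (T n), eL_C a c]
        exact hmul _ _ (halg c) (hHp n)
  intro u
  obtain ⟨b, rfl⟩ := Ideal.Quotient.mk_surjective u
  show P (gp a b)
  induction b using MvPolynomial.induction_on with
  | C p => exact hL p
  | add p q hp hq =>
      rw [RingHom.map_add (gp a) p q]; exact hadd _ _ hp hq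
  | mul_X q i hq =>
      rw [RingHom.map_mul (gp a) q (MvPolynomial.X i)]
      refine hmul _ _ hq ?_
      fin_cases i
      · exact hX
      · exact hY

section pb
variable {A : Type} [CommRing A] [Algebra ℂ A] {β : A → A → A}

lemma pb_zero_left (hP : IsPoissonBracket β) (w : A) : β 0 w = 0 := by
  have h := hP.2.2.1 0 0 w
  rw [mul_zero (0 : A)] at h
  calc β 0 w = 0 * β 0 w + β 0 w * 0 := h
    _ = 0 := by ring

lemma pb_add_left (hP : IsPoissonBracket β) (u v w : A) : β (u + v) w = β u w + β v w := by
  have h := hP.1 1 u v w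
  rwa [one_smul ℂ u, one_smul ℂ (β u w)] at h

lemma pb_one_left (hP : IsPoissonBracket β) (w : A) : β 1 w = 0 := by
  have h := hP.2.2.1 1 1 w
  rw [one_mul (1 : A)] at h
  linear_combination (-1 : A) * h

lemma pb_alg_left (hP : IsPoissonBracket β) (r : ℂ) (w : A) : β (algebraMap ℂ A r) w = 0 := by
  have e : (algebraMap ℂ A r) = r • (1 : A) + 0 := by
    rw [add_zero (r • (1 : A)), Algebra.algebraMap_eq_smul_one]
  rw [e, hP.1 r 1 0 w, pb_one_left hP w, pb_zero_left hP w, smul_zero r, add_zero (0 : A)]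

lemma pb_alg_right (hP : IsPoissonBracket β) (r : ℂ) (w : A) : β w (algebraMap ℂ A r) = 0 := by
  rw [hP.2.1 w (algebraMap ℂ A r), pb_alg_left hP r w, neg_zero]

lemma pb_add_right (hP : IsPoissonBracket β) (u v w : A) : β w (u + v) = β w u + β w v := by
  rw [hP.2.1 w (u + v), pb_add_left hP u v w, hP.2.1 u w, hP.2.1 v w]
  ring

lemma pb_mul_right (hP : IsPoissonBracket β) (u v w : A) : β w (u * v) = u * β w v + β w u * v := by
  rw [hP.2.1 w (u * v), hP.2.2.1 u v w, hP.2.1 v w, hP.2.1 u w]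
  ring

lemma pb_self (hP : IsPoissonBracket β) (u : A) : β u u = 0 := by
  have h := hP.2.1 u u
  have h2 : β u u + β u u = 0 := by linear_combination h
  have h3 : (2 : ℂ) • β u u = 0 := by rw [two_smul ℂ (β u u)]; exact h2
  calc β u u = (2 : ℂ)⁻¹ • ((2 : ℂ) • β u u) := (inv_smul_smul₀ two_ne_zero (β u u)).symm
    _ = (2 : ℂ)⁻¹ • (0 : A) := by rw [h3]
    _ = 0 := smul_zero _

end pb

section main
variable {a : L}

lemma alg_unit (a : L) {γ : ℂ} (hγ : γ ≠ 0) :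
    algebraMap ℂ (GW a) γ⁻¹ * algebraMap ℂ (GW a) γ = 1 := by
  rw [← RingHom.map_mul (algebraMap ℂ (GW a)) γ⁻¹ γ, inv_mul_cancel₀ hγ,
    RingHom.map_one (algebraMap ℂ (GW a))]

lemma part1 (hnu : ¬ IsUnit a) {β : GW a → GW a → GW a} (hβ : IsGWBracket a β)
    (ψ : GW a →ₐ[ℂ] GW a) (hcomm : ∀ u v : GW a, ψ (β u v) = β (ψ u) (ψ v))
    {γ : ℂ} (hγ : γ ≠ 0) (hh : ψ (gH a) = algebraMap ℂ (GW a) γ) :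
    ψ (gX a) = 0 ∧ ψ (gY a) = 0 ∧ leval γ a = 0 ∧ leval γ (lderiv a) = 0 := by
  have hP := hβ.1
  have hu := alg_unit a hγ
  haveI := GW_nontrivial a hnu
  have hx : ψ (gX a) = 0 := by
    have h1 := hcomm (gX a) (gH a)
    rw [hβ.2.1] at h1
    have h2 : ψ (gH a * gX a) = algebraMap ℂ (GW a) γ * ψ (gX a) := by
      rw [map_mul ψ (gH a) (gX a), hh]
    have h3 : β (ψ (gX a)) (ψ (gH a)) = 0 := by
      rw [hh]; exact pb_alg_right hP γ (ψ (gX a))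
    have hE : algebraMap ℂ (GW a) γ * ψ (gX a) = 0 := h2.symm.trans (h1.trans h3)
    linear_combination (algebraMap ℂ (GW a) γ⁻¹) * hE - ψ (gX a) * hu
  have hy : ψ (gY a) = 0 := by
    have h1 := hcomm (gY a) (gH a)
    rw [hβ.2.2.1] at h1
    have h2 : ψ (-(gH a * gY a)) = -(algebraMap ℂ (GW a) γ * ψ (gY a)) := by
      rw [map_neg ψ (gH a * gY a), map_mul ψ (gH a) (gY a), hh]
    have h3 : β (ψ (gY a)) (ψ (gH a)) = 0 := by
      rw [hh]; exact pb_alg_right hP γ (ψ (gY a))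
    have hE : -(algebraMap ℂ (GW a) γ * ψ (gY a)) = 0 := h2.symm.trans (h1.trans h3)
    linear_combination -(algebraMap ℂ (GW a) γ⁻¹) * hE - ψ (gY a) * hu
  have ha0 : leval γ a = 0 := by
    have h4 : ψ (gX a * gY a) = 0 := by
      rw [map_mul ψ (gX a) (gY a), hx, hy]; ring
    rw [gXY a] at h4
    have h5 := psi_eval hγ hh a
    apply (algebraMap ℂ (GW a)).injective
    rw [RingHom.map_zero (algebraMap ℂ (GW a))]
    exact h5.symm.trans h4
  have hd0 : leval γ (lderiv a) = 0 := by
    have h1 := hcomm (gY a) (gX a)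
    rw [hβ.2.2.2] at h1
    have h3 : β (ψ (gY a)) (ψ (gX a)) = 0 := by
      rw [hy]; exact pb_zero_left hP (ψ (gX a))
    have h2 : ψ (-(gp a (ih (lderiv a)) * gH a))
        = -(algebraMap ℂ (GW a) (leval γ (lderiv a)) * algebraMap ℂ (GW a) γ) := by
      rw [map_neg ψ (gp a (ih (lderiv a)) * gH a),
        map_mul ψ (gp a (ih (lderiv a))) (gH a), hh,
        show ψ (gp a (ih (lderiv a))) = ψ (eL a (lderiv a)) from rfl,
        psi_eval hγ hh (lderiv a)]
    have hE : algebraMap ℂ (GW a) (leval γ (lderiv a) * γ) = 0 := by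
      rw [RingHom.map_mul (algebraMap ℂ (GW a)) (leval γ (lderiv a)) γ]
      linear_combination -(h2.symm.trans (h1.trans h3))
    have := (algebraMap ℂ (GW a)).injective
      (hE.trans (RingHom.map_zero (algebraMap ℂ (GW a))).symm)
    exact (mul_eq_zero.mp this).resolve_right hγ
  exact ⟨hx, hy, ha0, hd0⟩

end main

section main2
variable {a : L}

lemma deriv_vanish {ψ : GW a →ₐ[ℂ] GW a} {γ : ℂ} (hγ : γ ≠ 0)
    (hh : ψ (gH a) = algebraMap ℂ (GW a) γ)
    (D : GW a → GW a)
    (hDadd : ∀ u v, D (u + v) = D u + D v)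
    (hDmul : ∀ u v, D (u * v) = ψ u * D v + D u * ψ v)
    (hDalg : ∀ r : ℂ, D (algebraMap ℂ (GW a) r) = 0)
    (hDH : D (gH a) = 0) (hDX : D (gX a) = 0) (hDY : D (gY a) = 0) :
    ∀ u, D u = 0 := by
  have hu := alg_unit a hγ
  have hDHm : D (gHp a (-1)) = 0 := by
    have h0 : gH a * gHp a (-1) = 1 := by
      rw [show gH a = gHp a 1 from rfl, gHp_mul a 1 (-1), show (1 + -1 : ℤ) = 0 by ring,
        gHp_zero a]
    have h1 : D (gH a * gHp a (-1)) = 0 := by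
      rw [h0, show (1 : GW a) = algebraMap ℂ (GW a) 1 from
        (RingHom.map_one (algebraMap ℂ (GW a))).symm]
      exact hDalg 1
    rw [hDmul (gH a) (gHp a (-1)), hh, hDH] at h1
    have hE : algebraMap ℂ (GW a) γ * D (gHp a (-1)) = 0 := by linear_combination h1
    linear_combination (algebraMap ℂ (GW a) γ⁻¹) * hE - D (gHp a (-1)) * hu
  exact gen_ind a (fun u => D u = 0) hDalg
    (fun u v hu' hv => by
      show D (u + v) = 0
      rw [hDadd u v, show D u = 0 from hu', show D v = 0 from hv]; ring)
    (fun u v hu' hv => by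
      show D (u * v) = 0
      rw [hDmul u v, show D u = 0 from hu', show D v = 0 from hv]; ring)
    hDH hDHm hDX hDY

lemma scalar_range {ψ : GW a →ₐ[ℂ] GW a} {γ : ℂ} (hγ : γ ≠ 0)
    (hh : ψ (gH a) = algebraMap ℂ (GW a) γ)
    (hx : ψ (gX a) = 0) (hy : ψ (gY a) = 0) :
    ∀ u, ∃ c : ℂ, ψ u = algebraMap ℂ (GW a) c := by
  refine gen_ind a _ (fun r => ⟨r, ψ.commutes r⟩) ?_ ?_ ⟨γ, hh⟩ ⟨γ⁻¹, psi_hinv hγ hh⟩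
    ⟨0, by rw [hx, RingHom.map_zero (algebraMap ℂ (GW a))]⟩
    ⟨0, by rw [hy, RingHom.map_zero (algebraMap ℂ (GW a))]⟩
  · rintro u v ⟨c, hc⟩ ⟨d, hd⟩
    exact ⟨c + d, by rw [map_add ψ u v, hc, hd, RingHom.map_add (algebraMap ℂ (GW a)) c d]⟩
  · rintro u v ⟨c, hc⟩ ⟨d, hd⟩
    exact ⟨c * d, by rw [map_mul ψ u v, hc, hd, RingHom.map_mul (algebraMap ℂ (GW a)) c d]⟩

lemma zero_type_poisson {β : GW a → GW a → GW a} (hβ : IsGWBracket a β)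
    {ψ : GW a →ₐ[ℂ] GW a} {γ : ℂ} (hγ : γ ≠ 0)
    (hh : ψ (gH a) = algebraMap ℂ (GW a) γ)
    (hx : ψ (gX a) = 0) (hy : ψ (gY a) = 0) (hd0 : leval γ (lderiv a) = 0) :
    ∀ u v : GW a, ψ (β u v) = β (ψ u) (ψ v) := by
  have hP := hβ.1
  -- ψ applied to brackets with generators
  have hbXH : ψ (β (gX a) (gH a)) = 0 := by
    rw [hβ.2.1, map_mul ψ (gH a) (gX a), hx]; ring
  have hbYH : ψ (β (gY a) (gH a)) = 0 := by
    rw [hβ.2.2.1, map_neg ψ (gH a * gY a), map_mul ψ (gH a) (gY a), hy]; ring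
  have hbYX : ψ (β (gY a) (gX a)) = 0 := by
    rw [hβ.2.2.2, map_neg ψ (gp a (ih (lderiv a)) * gH a),
      map_mul ψ (gp a (ih (lderiv a))) (gH a),
      show ψ (gp a (ih (lderiv a))) = ψ (eL a (lderiv a)) from rfl,
      psi_eval hγ hh (lderiv a), hd0, RingHom.map_zero (algebraMap ℂ (GW a))]
    ring
  have hbHX : ψ (β (gH a) (gX a)) = 0 := by
    rw [hP.2.1 (gH a) (gX a), map_neg ψ (β (gX a) (gH a)), hbXH, neg_zero]
  have hbHY : ψ (β (gH a) (gY a)) = 0 := by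
    rw [hP.2.1 (gH a) (gY a), map_neg ψ (β (gY a) (gH a)), hbYH, neg_zero]
  have hbXY : ψ (β (gX a) (gY a)) = 0 := by
    rw [hP.2.1 (gX a) (gY a), map_neg ψ (β (gY a) (gX a)), hbYX, neg_zero]
  have hbHH : ψ (β (gH a) (gH a)) = 0 := by rw [pb_self hP (gH a), map_zero ψ]
  have hbXX : ψ (β (gX a) (gX a)) = 0 := by rw [pb_self hP (gX a), map_zero ψ]
  have hbYY : ψ (β (gY a) (gY a)) = 0 := by rw [pb_self hP (gY a), map_zero ψ]
  -- step A : for g a generator, u ↦ ψ (β u g) vanishes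
  have stepA : ∀ g : GW a,
      ψ (β (gH a) g) = 0 → ψ (β (gX a) g) = 0 → ψ (β (gY a) g) = 0 →
      ∀ u, ψ (β u g) = 0 := by
    intro g hgH hgX hgY
    refine deriv_vanish hγ hh (fun u => ψ (β u g)) ?_ ?_ ?_ hgH hgX hgY
    · intro u v
      show ψ (β (u + v) g) = ψ (β u g) + ψ (β v g)
      rw [pb_add_left hP u v g, map_add ψ (β u g) (β v g)]
    · intro u v
      show ψ (β (u * v) g) = ψ u * ψ (β v g) + ψ (β u g) * ψ v
      rw [hP.2.2.1 u v g, map_add ψ (u * β v g) (β u g * v),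
        map_mul ψ u (β v g), map_mul ψ (β u g) v]
    · intro r
      show ψ (β (algebraMap ℂ (GW a) r) g) = 0
      rw [pb_alg_left hP r g, map_zero ψ]
  have hAH : ∀ u, ψ (β u (gH a)) = 0 := stepA (gH a) hbHH hbXH hbYH
  have hAX : ∀ u, ψ (β u (gX a)) = 0 := stepA (gX a) hbHX hbXX hbYX
  have hAY : ∀ u, ψ (β u (gY a)) = 0 := stepA (gY a) hbHY hbXY hbYY
  -- step B : for any u, v ↦ ψ (β u v) vanishes
  have stepB : ∀ u v, ψ (β u v) = 0 := by
    intro u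
    refine deriv_vanish hγ hh (fun v => ψ (β u v)) ?_ ?_ ?_ (hAH u) (hAX u) (hAY u)
    · intro v w
      show ψ (β u (v + w)) = ψ (β u v) + ψ (β u w)
      rw [pb_add_right hP v w u, map_add ψ (β u v) (β u w)]
    · intro v w
      show ψ (β u (v * w)) = ψ v * ψ (β u w) + ψ (β u v) * ψ w
      rw [pb_mul_right hP v w u, map_add ψ (v * β u w) (β u v * w),
        map_mul ψ v (β u w), map_mul ψ (β u v) w]
    · intro r
      show ψ (β u (algebraMap ℂ (GW a) r)) = 0
      rw [pb_alg_right hP r u, map_zero ψ]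
  intro u v
  obtain ⟨c, hc⟩ := scalar_range hγ hh hx hy u
  rw [stepB u v, hc, pb_alg_left hP c (ψ v)]

end main2

/-- (Zero type.) If `ψ` is a Poisson endomorphism of `A₁` with
`ψ(h) = γ ∈ ℂ*` then `ψ(x) = 0`, `ψ(y) = 0`, and `γ` is a common root of `a`
and `a'`, i.e. a root of `a` of multiplicity `> 1`.  Conversely each such `γ`
yields a unique zero-type Poisson endomorphism; if all roots of `a` are simple
there are no zero-type Poisson endomorphisms. -/
theorem GW_zero_type (a : L) (ha : a ≠ 0) (hnu : ¬ IsUnit a)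
    (β : GW a → GW a → GW a) (hβ : IsGWBracket a β) :
    (∀ ψ : GW a →ₐ[ℂ] GW a, (∀ u v : GW a, ψ (β u v) = β (ψ u) (ψ v)) →
      ∀ γ : ℂ, γ ≠ 0 → ψ (gH a) = algebraMap ℂ (GW a) γ →
        ψ (gX a) = 0 ∧ ψ (gY a) = 0 ∧ leval γ a = 0 ∧ leval γ (lderiv a) = 0) ∧
    (∀ γ : ℂ, γ ≠ 0 → leval γ a = 0 → leval γ (lderiv a) = 0 →
      ∃! ψ : GW a →ₐ[ℂ] GW a, (∀ u v : GW a, ψ (β u v) = β (ψ u) (ψ v)) ∧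
        ψ (gH a) = algebraMap ℂ (GW a) γ) ∧
    ((∀ γ : ℂ, γ ≠ 0 → leval γ a = 0 → leval γ (lderiv a) ≠ 0) →
      ∀ ψ : GW a →ₐ[ℂ] GW a, (∀ u v : GW a, ψ (β u v) = β (ψ u) (ψ v)) →
        ∀ γ : ℂ, γ ≠ 0 → ψ (gH a) ≠ algebraMap ℂ (GW a) γ) := by
  refine ⟨?_, ?_, ?_⟩
  · intro ψ hcomm γ hγ hh
    exact part1 hnu hβ ψ hcomm hγ hh
  · intro γ hγ ha0 hd0
    refine ⟨psiGW a γ hγ ha0,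
      ⟨zero_type_poisson hβ hγ (psiGW_H a γ hγ ha0) (psiGW_X a γ hγ ha0)
        (psiGW_Y a γ hγ ha0) hd0, psiGW_H a γ hγ ha0⟩, ?_⟩
    rintro ψ' ⟨hcomm', hh'⟩
    obtain ⟨hx', hy', -, -⟩ := part1 hnu hβ ψ' hcomm' hγ hh'
    apply AlgHom.ext
    refine gen_ind a (fun u => ψ' u = psiGW a γ hγ ha0 u) ?_ ?_ ?_ ?_ ?_ ?_ ?_
    · intro r
      show ψ' (algebraMap ℂ (GW a) r) = psiGW a γ hγ ha0 (algebraMap ℂ (GW a) r)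
      rw [ψ'.commutes r, (psiGW a γ hγ ha0).commutes r]
    · intro u v h1 h2
      show ψ' (u + v) = psiGW a γ hγ ha0 (u + v)
      rw [map_add ψ' u v, map_add (psiGW a γ hγ ha0) u v,
        show ψ' u = psiGW a γ hγ ha0 u from h1, show ψ' v = psiGW a γ hγ ha0 v from h2]
    · intro u v h1 h2
      show ψ' (u * v) = psiGW a γ hγ ha0 (u * v)
      rw [map_mul ψ' u v, map_mul (psiGW a γ hγ ha0) u v,
        show ψ' u = psiGW a γ hγ ha0 u from h1, show ψ' v = psiGW a γ hγ ha0 v from h2]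
    · show ψ' (gH a) = psiGW a γ hγ ha0 (gH a)
      rw [hh', psiGW_H a γ hγ ha0]
    · show ψ' (gHp a (-1)) = psiGW a γ hγ ha0 (gHp a (-1))
      rw [psi_hinv hγ hh', psi_hinv hγ (psiGW_H a γ hγ ha0)]
    · show ψ' (gX a) = psiGW a γ hγ ha0 (gX a)
      rw [hx', psiGW_X a γ hγ ha0]
    · show ψ' (gY a) = psiGW a γ hγ ha0 (gY a)
      rw [hy', psiGW_Y a γ hγ ha0]
  · intro hsimple ψ hcomm γ hγ hh
    obtain ⟨-, -, ha0, hd0⟩ := part1 hnu hβ ψ hcomm hγ hh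
    exact hsimple γ hγ ha0 hd0
end
end

section
/- A Poisson endomorphism ψ of A₁ with ψ(h) = γh for γ ∈ ℂ*, ψ(x) = b(h)x, ψ(y) = c(h)y must satisfy b(h)c(h)a(h) = a(γh) in ℂ[h^{±1}]; comparing top and bottom degrees forces b(h) = bh^n and c(h) = γ^d b^{-1} h^{-n} for some b ∈ ℂ*, n ∈ ℤ, and γ^{d−i_j} = 1 for every exponent i_j of a(h). -/
/- Common setup: the Poisson generalized Weyl algebra
   `A₁ = ℂ[h^{±1},x,y]/⟨xy - a(h)⟩` with Poisson bracket
   `{x,h} = hx`, `{y,h} = -hy`, `{y,x} = -a'(h)h`. -/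

noncomputable section
open LaurentPolynomial

/-! ### Auxiliary lemmas -/

set_option maxHeartbeats 1000000
set_option synthInstance.maxHeartbeats 1000000

lemma CT_apply (c : ℂ) (n k : ℤ) : (LaurentPolynomial.C c * T n : L).coeff k = if n = k then c else 0 := by
  rw [← single_eq_C_mul_T]; exact Finsupp.single_apply

lemma lscale_apply (γ : ℂ) (a : L) (k : ℤ) : (lscale γ a).coeff k = a.coeff k * γ ^ k := by
  classical
  rw [lscale, Finsupp.sum, AddMonoidAlgebra.coeff_sum, Finset.sum_apply']
  simp_rw [CT_apply]
  rw [Finset.sum_ite_eq' a.coeff.support k fun n => a.coeff n * γ ^ n]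
  by_cases h : k ∈ a.coeff.support
  · simp [h]
  · rw [if_neg h, Finsupp.notMem_support_iff.mp h, zero_mul]

/-- `p` has top degree `d`. -/
def TopD (p : L) (d : ℤ) : Prop := p.coeff d ≠ 0 ∧ ∀ k, d < k → p.coeff k = 0
/-- `p` has bottom degree `d`. -/
def BotD (p : L) (d : ℤ) : Prop := p.coeff d ≠ 0 ∧ ∀ k, k < d → p.coeff k = 0

lemma mul_apply_top (p q : L) (dp dq : ℤ) (hp : ∀ k, dp < k → p.coeff k = 0)
    (hq : ∀ k, dq < k → q.coeff k = 0) : (p * q).coeff (dp + dq) = p.coeff dp * q.coeff dq := by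
  classical
  rw [AddMonoidAlgebra.coeff_mul, Finsupp.sum]
  rw [Finset.sum_eq_single dp]
  · rw [Finsupp.sum, Finset.sum_eq_single dq]
    · simp
    · intro j hj hne
      rw [if_neg (by omega)]
    · intro h
      rw [Finsupp.notMem_support_iff.mp h]
      simp
  · intro i hi hne
    have hple : i < dp := by
      rcases lt_or_ge dp i with h | h
      · exact absurd (hp i h) (Finsupp.mem_support_iff.mp hi)
      · omega
    rw [Finsupp.sum]
    apply Finset.sum_eq_zero
    intro j hj
    split_ifs with h
    · rw [hq j (by omega), mul_zero]
    · rfl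
  · intro h
    rw [Finsupp.notMem_support_iff.mp h]
    simp [Finsupp.sum]

lemma mul_apply_gt (p q : L) (dp dq k : ℤ) (hp : ∀ k, dp < k → p.coeff k = 0)
    (hq : ∀ k, dq < k → q.coeff k = 0) (hk : dp + dq < k) : (p * q).coeff k = 0 := by
  classical
  rw [AddMonoidAlgebra.coeff_mul, Finsupp.sum]
  apply Finset.sum_eq_zero
  intro i hi
  rw [Finsupp.sum]
  apply Finset.sum_eq_zero
  intro j hj
  have hip : ¬ dp < i := fun h => Finsupp.mem_support_iff.mp hi (hp i h)
  have hjq : ¬ dq < j := fun h => Finsupp.mem_support_iff.mp hj (hq j h)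
  rw [if_neg (by omega)]

lemma TopD_mul {p q : L} {dp dq : ℤ} (hp : TopD p dp) (hq : TopD q dq) :
    TopD (p * q) (dp + dq) := by
  refine ⟨?_, fun k hk => mul_apply_gt p q dp dq k hp.2 hq.2 hk⟩
  rw [mul_apply_top p q dp dq hp.2 hq.2]
  exact mul_ne_zero hp.1 hq.1

lemma TopD_unique {p : L} {d d' : ℤ} (h : TopD p d) (h' : TopD p d') : d = d' := by
  rcases lt_trichotomy d d' with hlt | he | hgt
  · exact absurd (h.2 d' hlt) h'.1
  · exact he
  · exact absurd (h'.2 d hgt) h.1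

lemma BotD_invert {p : L} {d : ℤ} : BotD p d ↔ TopD (invert p) (-d) := by
  constructor
  · rintro ⟨h1, h2⟩
    exact ⟨by simpa using h1, fun k hk => by rw [invert_apply]; exact h2 _ (by omega)⟩
  · rintro ⟨h1, h2⟩
    refine ⟨by simpa using h1, fun k hk => ?_⟩
    have := h2 (-k) (by omega)
    simpa using this

lemma BotD_mul {p q : L} {dp dq : ℤ} (hp : BotD p dp) (hq : BotD q dq) :
    BotD (p * q) (dp + dq) := by
  rw [BotD_invert] at hp hq ⊢
  rw [map_mul]
  have := TopD_mul hp hq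
  rwa [show -dp + -dq = -(dp+dq) by ring] at this

lemma BotD_unique {p : L} {d d' : ℤ} (h : BotD p d) (h' : BotD p d') : d = d' := by
  rw [BotD_invert] at h h'
  have := TopD_unique h h'
  omega

lemma BotD_le_TopD {p : L} {e d : ℤ} (hb : BotD p e) (ht : TopD p d) : e ≤ d := by
  by_contra h
  exact hb.1 (ht.2 e (by omega))

lemma exists_TopD {p : L} (hp : p ≠ 0) : ∃ d, TopD p d := by
  have hne : p.coeff.support.Nonempty := Finsupp.support_nonempty_iff.mpr
    (fun h => hp (AddMonoidAlgebra.coeff_injective (h.trans AddMonoidAlgebra.coeff_zero.symm)))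
  refine ⟨p.coeff.support.max' hne, Finsupp.mem_support_iff.mp (p.coeff.support.max'_mem hne), fun k hk => ?_⟩
  by_contra h
  exact absurd (p.coeff.support.le_max' k (Finsupp.mem_support_iff.mpr h)) (by omega)

lemma exists_BotD {p : L} (hp : p ≠ 0) : ∃ d, BotD p d := by
  have hne : p.coeff.support.Nonempty := Finsupp.support_nonempty_iff.mpr
    (fun h => hp (AddMonoidAlgebra.coeff_injective (h.trans AddMonoidAlgebra.coeff_zero.symm)))
  refine ⟨p.coeff.support.min' hne, Finsupp.mem_support_iff.mp (p.coeff.support.min'_mem hne), fun k hk => ?_⟩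
  by_contra h
  exact absurd (p.coeff.support.min'_le k (Finsupp.mem_support_iff.mpr h)) (by omega)

lemma eq_monomial {p : L} {n : ℤ} (ht : TopD p n) (hb : BotD p n) :
    p = LaurentPolynomial.C (p.coeff n) * T n := by
  have : ∀ k, p.coeff k = (LaurentPolynomial.C (p.coeff n) * T n : L).coeff k := by
    intro k
    rw [CT_apply]
    rcases lt_trichotomy k n with h | h | h
    · rw [hb.2 k h, if_neg (by omega)]
    · rw [h, if_pos rfl]
    · rw [ht.2 k h, if_neg (by omega)]
  exact LaurentPolynomial.ext this

/-! ### The retraction `A₁ → ℂ[h^{±1}][t^{±1}]`, `x ↦ t`, `y ↦ a t⁻¹`, giving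
injectivity of `ℂ[h^{±1}] → A₁`. -/

def rho0 (a : L) : B1 →+* LaurentPolynomial L :=
  MvPolynomial.eval₂Hom (LaurentPolynomial.C) fun i =>
    if i = 0 then T 1 else LaurentPolynomial.C a * T (-1)

lemma rho0_gen (a : L) : rho0 a (Bx * By - ih a) = 0 := by
  rw [map_sub, map_mul, Bx, By, ih, rho0]
  simp only [MvPolynomial.eval₂Hom_X', MvPolynomial.eval₂Hom_C]
  norm_num

def rho (a : L) : GW a →+* LaurentPolynomial L :=
  Ideal.Quotient.lift (GWI a) (rho0 a) (by
    intro x hx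
    rw [GWI, Ideal.mem_span_singleton] at hx
    obtain ⟨g, rfl⟩ := hx
    rw [map_mul, rho0_gen, zero_mul])

lemma gw_inj (a : L) : Function.Injective fun q : L => gp a (ih q) := by
  intro q q' h
  have h' : gp a (ih q) = gp a (ih q') := h
  have h2 : rho a (gp a (ih q)) = rho a (gp a (ih q')) := by rw [h']
  rw [gp, rho] at h2
  rw [Ideal.Quotient.lift_mk, Ideal.Quotient.lift_mk] at h2
  rw [ih, rho0] at h2
  simp only [MvPolynomial.eval₂Hom_C] at h2
  have h0 : (LaurentPolynomial.C q : LaurentPolynomial L).coeff 0 = (LaurentPolynomial.C q').coeff 0 := by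
    rw [h2]
  simpa [← single_eq_C_mul_T, T_zero] using h0

/-! ### Behaviour of `ψ` on `ℂ[h^{±1}] ⊆ A₁`. -/

section psi
variable (a : L) (ψ : GW a →ₐ[ℂ] GW a) (γ : ℂ) (hγ : γ ≠ 0)
  (hψh : ψ (gH a) = γ • gH a)

lemma gpih_T_mul (m n : ℤ) : gp a (ih (T m)) * gp a (ih (T n)) = gp a (ih (T (m+n))) := by
  rw [← map_mul, ← map_mul, ← T_add]

include hψh in
lemma psi_T_nat (n : ℕ) : ψ (gp a (ih (T (n:ℤ)))) = γ ^ (n:ℤ) • gp a (ih (T (n:ℤ))) := by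
  have hT : (T (n:ℤ) : L) = (T 1)^n := by rw [T_pow]; norm_num
  rw [hT, map_pow, map_pow, map_pow, zpow_natCast]
  have : gp a (ih (T 1)) = gH a := rfl
  rw [this, hψh, smul_pow]

include hψh hγ in
lemma psi_T (n : ℤ) : ψ (gp a (ih (T n))) = γ ^ n • gp a (ih (T n)) := by
  rcases le_or_gt 0 n with h | h
  · obtain ⟨m, rfl⟩ := Int.eq_ofNat_of_zero_le h
    exact psi_T_nat a ψ γ hψh m
  · obtain ⟨m, rfl⟩ : ∃ m : ℕ, n = -(m:ℤ) := ⟨n.natAbs, by omega⟩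
    set u := gp a (ih (T (-(m:ℤ)))) with hu
    set v := gp a (ih (T (m:ℤ))) with hv
    have huv : u * v = 1 := by
      rw [hu, hv, gpih_T_mul]
      norm_num
    have hψv : ψ v = γ ^ (m:ℤ) • v := psi_T_nat a ψ γ hψh m
    have key : ψ v * (γ ^ (-(m:ℤ)) • u) = 1 := by
      rw [hψv, smul_mul_smul_comm, ← zpow_add₀ hγ]
      rw [mul_comm v u, huv]
      norm_num
    calc ψ u = ψ u * (ψ v * (γ ^ (-(m:ℤ)) • u)) := by rw [key]; exact (mul_one (ψ u)).symm
    _ = (ψ u * ψ v) * (γ ^ (-(m:ℤ)) • u) := (mul_assoc (ψ u) (ψ v) (γ ^ (-(m:ℤ)) • u)).symm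
    _ = ψ (u * v) * (γ ^ (-(m:ℤ)) • u) := by rw [map_mul]
    _ = γ ^ (-(m:ℤ)) • u := by rw [huv, map_one]; exact one_mul (γ ^ (-(m:ℤ)) • u)

include hψh hγ in
lemma psi_L (q : L) : ψ (gp a (ih q)) = gp a (ih (lscale γ q)) := by
  conv_lhs => rw [← AddMonoidAlgebra.sum_coeff_single q]
  rw [lscale, map_finsuppSum, map_finsuppSum, map_finsuppSum, map_finsuppSum, map_finsuppSum]
  apply Finsupp.sum_congr
  intro n _
  rw [single_eq_C_mul_T, map_mul, map_mul, map_mul, map_mul, map_mul]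
  have hC : ∀ z : ℂ, gp a (ih (LaurentPolynomial.C z)) = algebraMap ℂ (GW a) z := fun z => rfl
  rw [hC, hC, ψ.commutes, psi_T a ψ γ hγ hψh n]
  have h1 : (γ:ℂ)^n • (gp a (ih (T n))) = algebraMap ℂ (GW a) (γ^n) * gp a (ih (T n)) :=
    Algebra.smul_def (R := ℂ) (A := GW a) (γ^n) (gp a (ih (T n)))
  rw [h1, map_mul]
  exact (mul_assoc (algebraMap ℂ (GW a) (q.coeff n)) (algebraMap ℂ (GW a) (γ^n)) (gp a (ih (T n)))).symm

end psi
/-- A Poisson endomorphism `ψ` of `A₁` with `ψ(h) = γh`,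
`ψ(x) = b(h)x`, `ψ(y) = c(h)y` must satisfy `b(h)c(h)a(h) = a(γh)` in
`ℂ[h^{±1}]`; comparing top and bottom degrees forces `b(h) = b₀h^n` and
`c(h) = γ^d b₀⁻¹ h^{-n}` for some `b₀ ∈ ℂ*`, `n ∈ ℤ`, and `γ^{d-i} = 1` for
every exponent `i` of `a`, where `d` is the top exponent of `a`. -/
theorem GW_positive_type_computation (a : L) (ha : a ≠ 0)
    (hm : 2 ≤ (Finsupp.support (AddMonoidAlgebra.coeff a)).card)
    (d : ℤ) (hd : ∀ i ∈ Finsupp.support (AddMonoidAlgebra.coeff a), i ≤ d) (hdmem : d ∈ Finsupp.support (AddMonoidAlgebra.coeff a))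
    (β : GW a → GW a → GW a) (hβ : IsGWBracket a β)
    (ψ : GW a →ₐ[ℂ] GW a) (hψ : ∀ u v : GW a, ψ (β u v) = β (ψ u) (ψ v))
    (γ : ℂ) (hγ : γ ≠ 0) (b c : L) (hb : b ≠ 0) (hc : c ≠ 0)
    (hψh : ψ (gH a) = γ • gH a)
    (hψx : ψ (gX a) = gp a (ih b) * gX a)
    (hψy : ψ (gY a) = gp a (ih c) * gY a) :
    b * c * a = lscale γ a ∧
    ∃ b₀ : ℂ, b₀ ≠ 0 ∧ ∃ n : ℤ,
      b = LaurentPolynomial.C b₀ * T n ∧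
      c = LaurentPolynomial.C (γ ^ d * b₀⁻¹) * T (-n) ∧
      ∀ i ∈ Finsupp.support (AddMonoidAlgebra.coeff a), γ ^ (d - i) = 1 := by

  clear hψ hβ hm
  -- Step 1: the relation in A₁ and the fundamental identity b c a = a(γh).
  have hrel : gX a * gY a = gp a (ih a) := by
    rw [gX, gY, gp, ← map_mul]
    exact Ideal.Quotient.eq.mpr (Ideal.mem_span_singleton_self _)
  have h1 : ψ (gX a * gY a) = gp a (ih (b * c * a)) := by
    rw [map_mul, hψx, hψy]
    have hre : (gp a (ih b) * gX a) * (gp a (ih c) * gY a)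
        = (gp a (ih b) * gp a (ih c)) * (gX a * gY a) :=
      mul_mul_mul_comm (gp a (ih b)) (gX a) (gp a (ih c)) (gY a)
    rw [hre, hrel, ← map_mul, ← map_mul, ← map_mul, ← map_mul]
  have h2 : ψ (gX a * gY a) = gp a (ih (lscale γ a)) := by
    rw [hrel]; exact psi_L a ψ γ hγ hψh a
  have heq : b * c * a = lscale γ a := gw_inj a (h1.symm.trans h2)
  refine ⟨heq, ?_⟩
  -- Step 2: degree bookkeeping.
  have hta : TopD a d := by
    refine ⟨Finsupp.mem_support_iff.mp hdmem, fun k hk => ?_⟩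
    by_contra hne
    exact absurd (hd k (Finsupp.mem_support_iff.mpr hne)) (by omega)
  obtain ⟨e, hba⟩ := exists_BotD ha
  obtain ⟨db, htb⟩ := exists_TopD hb
  obtain ⟨eb, hbb⟩ := exists_BotD hb
  obtain ⟨dc, htc⟩ := exists_TopD hc
  obtain ⟨ec, hbc'⟩ := exists_BotD hc
  have htl : TopD (lscale γ a) d := by
    refine ⟨?_, fun k hk => ?_⟩
    · rw [lscale_apply]; exact mul_ne_zero hta.1 (zpow_ne_zero _ hγ)
    · rw [lscale_apply, hta.2 k hk, zero_mul]
  have hbl : BotD (lscale γ a) e := by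
    refine ⟨?_, fun k hk => ?_⟩
    · rw [lscale_apply]; exact mul_ne_zero hba.1 (zpow_ne_zero _ hγ)
    · rw [lscale_apply, hba.2 k hk, zero_mul]
  have h3 : TopD (b * c * a) (db + dc + d) := TopD_mul (TopD_mul htb htc) hta
  have h4 : BotD (b * c * a) (eb + ec + e) := BotD_mul (BotD_mul hbb hbc') hba
  rw [heq] at h3 h4
  have h5 : db + dc + d = d := TopD_unique h3 htl
  have h6 : eb + ec + e = e := BotD_unique h4 hbl
  have h7 : eb ≤ db := BotD_le_TopD hbb htb
  have h8 : ec ≤ dc := BotD_le_TopD hbc' htc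
  have heb : eb = db := by omega
  have hec : ec = dc := by omega
  have hdc : dc = -db := by omega
  rw [heb] at hbb
  rw [hec, hdc] at hbc'
  rw [hdc] at htc
  -- Step 3: b and c are monomials.
  set b₀ := b.coeff db with hb₀def
  set c₀ := c.coeff (-db) with hc₀def
  have hb₀ : b₀ ≠ 0 := htb.1
  have hc₀ : c₀ ≠ 0 := htc.1
  have hbmono : b = LaurentPolynomial.C b₀ * T db := eq_monomial htb hbb
  have hcmono : c = LaurentPolynomial.C c₀ * T (-db) := eq_monomial htc hbc'
  have hbc : b * c = LaurentPolynomial.C (b₀ * c₀) := by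
    rw [hbmono, hcmono, mul_mul_mul_comm, ← map_mul, ← T_add]
    norm_num
  -- Step 4: coefficient comparison.
  have hco : ∀ k : ℤ, b₀ * c₀ * a.coeff k = a.coeff k * γ ^ k := by
    intro k
    have h9 : (b * c * a).coeff k = (lscale γ a).coeff k := by rw [heq]
    rw [lscale_apply, hbc] at h9
    have hCs : (LaurentPolynomial.C (b₀ * c₀) : L) = AddMonoidAlgebra.single 0 (b₀ * c₀) := by
      rw [single_eq_C_mul_T, T_zero, mul_one]
    rw [hCs, AddMonoidAlgebra.coeff_single_zero_mul] at h9
    exact h9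
  have he₀ : b₀ * c₀ = γ ^ d := by
    have := hco d
    rw [mul_comm (a.coeff d) (γ ^ d)] at this
    exact mul_right_cancel₀ hta.1 this
  have hexps : ∀ i ∈ Finsupp.support (AddMonoidAlgebra.coeff a), γ ^ (d - i) = 1 := by
    intro i hi
    have hai : a.coeff i ≠ 0 := Finsupp.mem_support_iff.mp hi
    have hgi : b₀ * c₀ = γ ^ i := by
      have := hco i
      rw [mul_comm (a.coeff i) (γ ^ i)] at this
      exact mul_right_cancel₀ hai this
    rw [zpow_sub₀ hγ, ← he₀, ← hgi, div_self (mul_ne_zero hb₀ hc₀)]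
  have hc₀val : c₀ = γ ^ d * b₀⁻¹ := by
    rw [← he₀, mul_comm b₀ c₀, mul_assoc, mul_inv_cancel₀ hb₀, mul_one]
  exact ⟨b₀, hb₀, db, hbmono, by rw [hcmono, hc₀val], hexps⟩
end
end

section
/- For a prime Poisson ideal P of A₁ that is stable under the map f(a) = {a,h}h^{-1}, if P is nonzero then P contains a nonzero homogeneous element w_k ∈ W_k for some k ∈ ℤ. -/
/- Common setup: the Poisson generalized Weyl algebra
   `A₁ = ℂ[h^{±1},x,y]/⟨xy - a(h)⟩` with Poisson bracket
   `{x,h} = hx`, `{y,h} = -hy`, `{y,x} = -a'(h)h`. -/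

noncomputable section
open LaurentPolynomial

set_option synthInstance.maxHeartbeats 1000000
set_option maxHeartbeats 1000000

namespace GWaux

variable {a : L} {β : GW a → GW a → GW a}

lemma gHp_add (i j : ℤ) : gHp a (i + j) = gHp a i * gHp a j := by
  unfold gHp; rw [T_add, map_mul, map_mul]

lemma gHp_zero : gHp a 0 = 1 := by
  unfold gHp; rw [T_zero, map_one, map_one]

lemma gH_eq : gH a = gHp a 1 := rfl

lemma gH_mul_inv : gH a * gHp a (-1) = 1 := by
  rw [gH_eq, ← gHp_add]
  norm_num [gHp_zero]

section bracket
variable (hβ : IsPoissonBracket β)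
include hβ

lemma β_add_left (u v w : GW a) : β (u + v) w = β u w + β v w := by
  have h := hβ.1 1 u v w
  rw [one_smul ℂ u, one_smul ℂ (β u w)] at h
  exact h

lemma β_zero_left (w : GW a) : β 0 w = 0 := by
  have h := β_add_left hβ 0 0 w
  rw [add_zero (0 : GW a)] at h
  exact left_eq_add.mp h

lemma β_smul_left (r : ℂ) (u w : GW a) : β (r • u) w = r • β u w := by
  have h := hβ.1 r u 0 w
  rw [add_zero (r • u), β_zero_left hβ, add_zero (r • β u w)] at h
  exact h

lemma β_self (u : GW a) : β u u = 0 := by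
  have h := hβ.2.1 u u
  have h1 : β u u + β u u = 0 := by nth_rewrite 1 [h]; exact neg_add_cancel _
  have h2 : (2 : ℂ) • β u u = 0 := by rw [two_smul ℂ (β u u)]; exact h1
  rcases smul_eq_zero.mp h2 with h3 | h3
  · norm_num at h3
  · exact h3

lemma β_one_left (w : GW a) : β 1 w = 0 := by
  have h := hβ.2.2.1 1 1 w
  have e : (1 : GW a) * 1 = 1 := one_mul (M := GW a) 1
  rw [e, one_mul (β 1 w), mul_one (β 1 w)] at h
  exact left_eq_add.mp h

lemma β_gHp (m : ℤ) : β (gHp a m) (gH a) = 0 := by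
  induction m using Int.induction_on with
  | zero => rw [gHp_zero]; exact β_one_left hβ _
  | succ n ihn =>
      have e : gHp a (n + 1) = gHp a n * gH a := by rw [gHp_add, gH_eq]
      rw [e, hβ.2.2.1, ihn, β_self hβ, mul_zero (gHp a n), zero_mul (gH a), add_zero]
  | pred n ihn =>
      have e : gHp a (-n) = gHp a (-n - 1) * gH a := by
        rw [gH_eq, ← gHp_add, show (-(n:ℤ) - 1 + 1) = -(n:ℤ) by ring]
      have h := hβ.2.2.1 (gHp a (-n - 1)) (gH a) (gH a)
      rw [← e, ihn, β_self hβ, mul_zero (gHp a (-n-1)), zero_add] at h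
      have h2 := congrArg (· * gHp a (-1)) h
      rw [zero_mul (gHp a (-1)), mul_assoc (β (gHp a (-n-1)) (gH a)) (gH a) (gHp a (-1)), gH_mul_inv, mul_one (β (gHp a (-n-1)) (gH a))] at h2
      exact h2.symm

end bracket
end GWaux

namespace GWaux
variable {a : L} {β : GW a → GW a → GW a}

section eig
variable (hg : IsGWBracket a β)
include hg

lemma β_mul_eig {t s : GW a} {c d : ℂ}
    (ht : β t (gH a) = c • (gH a * t)) (hs : β s (gH a) = d • (gH a * s)) :
    β (t * s) (gH a) = (c + d) • (gH a * (t * s)) := by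
  rw [hg.1.2.2.1 t s (gH a), ht, hs]
  rw [mul_smul_comm d t (gH a * s), smul_mul_assoc c (gH a * t) s]
  rw [show t * (gH a * s) = gH a * (t * s) by ring,
      show gH a * t * s = gH a * (t * s) by ring]
  rw [add_comm c d, add_smul d c (gH a * (t * s))]

lemma eig_gHp (m : ℤ) : β (gHp a m) (gH a) = (0 : ℂ) • (gH a * gHp a m) := by
  rw [zero_smul ℂ (gH a * gHp a m)]
  exact β_gHp hg.1 m

lemma eig_pow {t : GW a} {c : ℂ} (ht : β t (gH a) = c • (gH a * t)) (n : ℕ) :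
    β (t ^ n) (gH a) = ((n : ℂ) * c) • (gH a * t ^ n) := by
  induction n with
  | zero =>
      rw [pow_zero t, β_one_left hg.1 (gH a), Nat.cast_zero, zero_mul c,
        zero_smul ℂ (gH a * 1)]
  | succ n ih =>
      rw [pow_succ t n, β_mul_eig hg ih ht, Nat.cast_succ, add_mul, one_mul]

lemma eig_x : β (gX a) (gH a) = (1 : ℂ) • (gH a * gX a) := by
  rw [hg.2.1, one_smul ℂ (gH a * gX a)]

lemma eig_y : β (gY a) (gH a) = (-1 : ℂ) • (gH a * gY a) := by
  rw [hg.2.2.1, ← neg_one_smul ℂ (gH a * gY a)]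

lemma eig_W (k : ℤ) (w : GW a) (hw : w ∈ W a k) :
    β w (gH a) = (k : ℂ) • (gH a * w) := by
  refine Submodule.span_induction ?_ ?_ ?_ ?_ hw
  · rintro x ⟨m, rfl⟩
    by_cases hk : 0 ≤ k
    · rw [if_pos hk]
      have h := β_mul_eig hg (eig_gHp hg m) (eig_pow hg (eig_x hg) k.toNat)
      rw [h, zero_add, mul_one]
      congr 2
      rw [show ((k.toNat : ℂ)) = (((k.toNat : ℤ)) : ℂ) by push_cast; ring,
        Int.toNat_of_nonneg hk]
    · rw [if_neg hk]
      have h := β_mul_eig hg (eig_gHp hg m) (eig_pow hg (eig_y hg) (-k).toNat)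
      rw [h, zero_add]
      congr 2
      rw [show (((-k).toNat : ℂ)) * (-1) = -((((-k).toNat : ℤ)) : ℂ) by push_cast; ring,
        Int.toNat_of_nonneg (by omega : (0:ℤ) ≤ -k)]
      push_cast
      ring
  · rw [β_zero_left hg.1 (gH a), mul_zero (gH a), smul_zero ((k:ℂ))]
  · intro u v _ _ hu hv
    rw [β_add_left hg.1 u v (gH a), hu, hv, ← smul_add ((k:ℂ)) (gH a * u) (gH a * v),
      ← mul_add (gH a) u v]
  · intro r u _ hu
    rw [β_smul_left hg.1 r u (gH a), hu, smul_comm r ((k:ℂ)) (gH a * u),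
      mul_smul_comm r (gH a) u]

lemma f_W (k : ℤ) (w : GW a) (hw : w ∈ W a k) :
    β w (gH a) * gHp a (-1) = (k : ℂ) • w := by
  rw [eig_W hg k w hw, smul_mul_assoc ((k:ℂ)) (gH a * w) (gHp a (-1))]
  congr 1
  rw [show gH a * w * gHp a (-1) = gH a * gHp a (-1) * w by ring, gH_mul_inv, one_mul w]

end eig
end GWaux

namespace GWaux
variable {a : L}

lemma mem_W_pos (m k : ℤ) (hk : 0 ≤ k) : gHp a m * gX a ^ k.toNat ∈ W a k :=
  Submodule.subset_span ⟨m, by rw [if_pos hk]⟩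

lemma mem_W_neg (m k : ℤ) (hk : k ≤ 0) : gHp a m * gY a ^ (-k).toNat ∈ W a k := by
  rcases lt_or_eq_of_le hk with h | h
  · exact Submodule.subset_span ⟨m, by rw [if_neg (by omega)]⟩
  · subst h
    refine Submodule.subset_span ⟨m, ?_⟩
    rw [if_pos le_rfl]
    norm_num

lemma smul_eq_Cmul (c : ℂ) (w : GW a) : gp a (ih (LaurentPolynomial.C c)) * w = c • w := by
  rw [Algebra.smul_def (A := GW a) c w]
  congr 1

lemma gHp_mul_W (n k : ℤ) (w : GW a) (hw : w ∈ W a k) : gHp a n * w ∈ W a k := by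
  refine Submodule.span_induction ?_ ?_ ?_ ?_ hw
  · rintro x ⟨m, rfl⟩
    rw [← mul_assoc (gHp a n) (gHp a m) _, ← gHp_add n m]
    exact Submodule.subset_span ⟨n + m, rfl⟩
  · rw [mul_zero (gHp a n)]; exact Submodule.zero_mem _
  · intro u v _ _ hu hv
    rw [mul_add (gHp a n) u v]
    exact Submodule.add_mem _ hu hv
  · intro r u _ hu
    rw [mul_smul_comm r (gHp a n) u]
    exact Submodule.smul_mem _ r hu

lemma ih_mul_W (l : L) (k : ℤ) (w : GW a) (hw : w ∈ W a k) : gp a (ih l) * w ∈ W a k := by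
  induction l using LaurentPolynomial.induction_on' with
  | add p q hp hq =>
      rw [map_add ih, map_add (gp a), add_mul]
      exact Submodule.add_mem _ hp hq
  | C_mul_T n c =>
      rw [map_mul ih, map_mul (gp a), mul_assoc, smul_eq_Cmul c (gp a (ih (T n)) * w)]
      exact Submodule.smul_mem _ c (gHp_mul_W n k w hw)

end GWaux

namespace GWaux
variable {a : L}

lemma gXgY : gX a * gY a = gp a (ih a) := by
  rw [show gX a * gY a = gp a (Bx * By) from (map_mul (gp a) Bx By).symm]
  exact Ideal.Quotient.eq.mpr (Ideal.subset_span (Set.mem_singleton _))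

lemma x_mul_W (k : ℤ) (w : GW a) (hw : w ∈ W a k) : gX a * w ∈ W a (k + 1) := by
  refine Submodule.span_induction ?_ ?_ ?_ ?_ hw
  · rintro x ⟨m, rfl⟩
    by_cases hk : 0 ≤ k
    · rw [if_pos hk]
      have e : (k + 1).toNat = k.toNat + 1 := by omega
      rw [show gX a * (gHp a m * gX a ^ k.toNat) = gHp a m * (gX a ^ k.toNat * gX a) by
          ring, ← pow_succ (gX a) k.toNat, ← e]
      exact mem_W_pos m (k + 1) (by omega)
    · rw [if_neg hk]
      have e : (-k).toNat = (-(k + 1)).toNat + 1 := by omega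
      have e2 : gX a * (gHp a m * gY a ^ (-k).toNat)
          = (gX a * gY a) * (gHp a m * gY a ^ (-(k + 1)).toNat) := by
        rw [e, pow_succ (gY a) ((-(k + 1)).toNat)]; ring
      rw [e2, gXgY]
      exact ih_mul_W a (k + 1) _ (mem_W_neg m (k + 1) (by omega))
  · rw [mul_zero (gX a)]; exact Submodule.zero_mem _
  · intro u v _ _ hu hv
    rw [mul_add (gX a) u v]; exact Submodule.add_mem _ hu hv
  · intro r u _ hu
    rw [mul_smul_comm r (gX a) u]; exact Submodule.smul_mem _ r hu

lemma y_mul_W (k : ℤ) (w : GW a) (hw : w ∈ W a k) : gY a * w ∈ W a (k - 1) := by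
  refine Submodule.span_induction ?_ ?_ ?_ ?_ hw
  · rintro x ⟨m, rfl⟩
    by_cases hk : 0 ≤ k
    · rw [if_pos hk]
      rcases lt_or_eq_of_le hk with hpos | hzero
      · have e : k.toNat = (k - 1).toNat + 1 := by omega
        have e2 : gY a * (gHp a m * gX a ^ k.toNat)
            = (gX a * gY a) * (gHp a m * gX a ^ (k - 1).toNat) := by
          rw [e, pow_succ (gX a) ((k - 1).toNat)]; ring
        rw [e2, gXgY]
        exact ih_mul_W a (k - 1) _ (mem_W_pos m (k - 1) (by omega))
      · have e : k.toNat = 0 := by omega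
        have e2 : gY a * (gHp a m * gX a ^ k.toNat)
            = gHp a m * gY a ^ (-(k - 1)).toNat := by
          rw [e, show (-(k - 1)).toNat = 1 by omega, pow_zero (gX a), pow_one (gY a)]; ring
        rw [e2]
        exact mem_W_neg m (k - 1) (by omega)
    · rw [if_neg hk]
      have e : (-(k - 1)).toNat = (-k).toNat + 1 := by omega
      have e2 : gY a * (gHp a m * gY a ^ (-k).toNat)
          = gHp a m * gY a ^ (-(k - 1)).toNat := by
        rw [e, pow_succ (gY a) ((-k).toNat)]; ring
      rw [e2]
      exact mem_W_neg m (k - 1) (by omega)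
  · rw [mul_zero (gY a)]; exact Submodule.zero_mem _
  · intro u v _ _ hu hv
    rw [mul_add (gY a) u v]; exact Submodule.add_mem _ hu hv
  · intro r u _ hu
    rw [mul_smul_comm r (gY a) u]; exact Submodule.smul_mem _ r hu

lemma one_mem_W0 : (1 : GW a) ∈ W a 0 := by
  have h := mem_W_pos (a := a) 0 0 le_rfl
  rw [gHp_zero, show ((0:ℤ).toNat) = 0 from rfl, pow_zero (gX a), one_mul (1 : GW a)] at h
  exact h

lemma x_mul_iSup (w : GW a) (hw : w ∈ ⨆ k, W a k) : gX a * w ∈ ⨆ k, W a k := by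
  refine Submodule.iSup_induction (W a) (motive := fun u => gX a * u ∈ ⨆ k, W a k) hw
    (fun k u hu => ?_) ?_ (fun u v hu hv => ?_)
  · exact Submodule.mem_iSup_of_mem (k + 1) (x_mul_W k u hu)
  · show gX a * (0 : GW a) ∈ ⨆ k, W a k
    rw [mul_zero (gX a)]; exact Submodule.zero_mem _
  · show gX a * (u + v) ∈ ⨆ k, W a k
    rw [mul_add (gX a) u v]; exact Submodule.add_mem _ hu hv

lemma y_mul_iSup (w : GW a) (hw : w ∈ ⨆ k, W a k) : gY a * w ∈ ⨆ k, W a k := by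
  refine Submodule.iSup_induction (W a) (motive := fun u => gY a * u ∈ ⨆ k, W a k) hw
    (fun k u hu => ?_) ?_ (fun u v hu hv => ?_)
  · exact Submodule.mem_iSup_of_mem (k - 1) (y_mul_W k u hu)
  · show gY a * (0 : GW a) ∈ ⨆ k, W a k
    rw [mul_zero (gY a)]; exact Submodule.zero_mem _
  · show gY a * (u + v) ∈ ⨆ k, W a k
    rw [mul_add (gY a) u v]; exact Submodule.add_mem _ hu hv

lemma mem_iSup_W (w : GW a) : w ∈ ⨆ k, W a k := by
  obtain ⟨b, rfl⟩ := Ideal.Quotient.mk_surjective (I := GWI a) w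
  induction b using MvPolynomial.induction_on with
  | C l =>
      have h := ih_mul_W (a := a) l 0 1 one_mem_W0
      rw [mul_one (gp a (ih l))] at h
      exact Submodule.mem_iSup_of_mem 0 h
  | add p q hp hq =>
      rw [map_add]
      exact Submodule.add_mem _ hp hq
  | mul_X p i hp =>
      have hi : i = 0 ∨ i = 1 := by
        have hv : i.val = 0 ∨ i.val = 1 := by omega
        rcases hv with hv | hv
        · exact Or.inl (Fin.ext hv)
        · exact Or.inr (Fin.ext hv)
      rcases hi with rfl | rfl
      · rw [show (Ideal.Quotient.mk (GWI a)) (p * MvPolynomial.X 0)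
            = gX a * (Ideal.Quotient.mk (GWI a) p) by
            rw [map_mul]; exact mul_comm (G := GW a) _ _]
        exact x_mul_iSup _ hp
      · rw [show (Ideal.Quotient.mk (GWI a)) (p * MvPolynomial.X 1)
            = gY a * (Ideal.Quotient.mk (GWI a) p) by
            rw [map_mul]; exact mul_comm (G := GW a) _ _]
        exact y_mul_iSup _ hp

end GWaux

namespace GWaux
variable {a : L} {β : GW a → GW a → GW a}

lemma f_sum (hg : IsGWBracket a β) (s : Finset ℤ) (w : ℤ → GW a)
    (hW : ∀ k ∈ s, w k ∈ W a k) :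
    β (∑ k ∈ s, w k) (gH a) * gHp a (-1) = ∑ k ∈ s, (k : ℂ) • w k := by
  have F : GW a →+ GW a :=
    AddMonoidHom.mk' (fun u => β u (gH a)) (fun u v => β_add_left hg.1 u v (gH a))
  have hF : β (∑ k ∈ s, w k) (gH a) = ∑ k ∈ s, β (w k) (gH a) := by
    have := map_sum (AddMonoidHom.mk' (fun u => β u (gH a))
      (fun u v => β_add_left hg.1 u v (gH a))) w s
    exact this
  rw [hF, Finset.sum_mul]
  exact Finset.sum_congr rfl fun k hk => f_W hg k (w k) (hW k hk)

lemma components_in_P (hg : IsGWBracket a β) (P : Ideal (GW a))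
    (hpoisson : ∀ p ∈ P, ∀ r : GW a, β p r ∈ P) :
    ∀ s : Finset ℤ, ∀ w : ℤ → GW a, (∀ k ∈ s, w k ∈ W a k) →
      (∑ k ∈ s, w k) ∈ P → ∀ k ∈ s, w k ∈ P := by
  intro s
  induction s using Finset.strongInduction with
  | _ s ihs =>
    intro w hW hsum k hk
    have hfp : β (∑ j ∈ s, w j) (gH a) * gHp a (-1) ∈ P :=
      by
        have h1 := Ideal.mul_mem_left P (gHp a (-1)) (hpoisson _ hsum (gH a))
        rwa [mul_comm (gHp a (-1))] at h1
    have hkp : (k : ℂ) • (∑ j ∈ s, w j) ∈ P := by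
      rw [Algebra.smul_def (A := GW a) ((k:ℂ)) (∑ j ∈ s, w j)]
      exact Ideal.mul_mem_left _ _ hsum
    have hq : β (∑ j ∈ s, w j) (gH a) * gHp a (-1) - (k : ℂ) • (∑ j ∈ s, w j) ∈ P :=
      Ideal.sub_mem _ hfp hkp
    have e : β (∑ j ∈ s, w j) (gH a) * gHp a (-1) - (k : ℂ) • (∑ j ∈ s, w j)
        = ∑ j ∈ s.erase k, ((j : ℂ) - (k : ℂ)) • w j := by
      rw [f_sum hg s w hW, Finset.smul_sum, ← Finset.sum_sub_distrib]
      have e2 : ∀ j ∈ s, (j : ℂ) • w j - (k : ℂ) • w j = ((j : ℂ) - (k : ℂ)) • w j :=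
        fun j _ => (sub_smul ((j:ℂ)) ((k:ℂ)) (w j)).symm
      rw [Finset.sum_congr rfl e2]
      rw [← Finset.add_sum_erase s (fun j => ((j : ℂ) - (k : ℂ)) • w j) hk,
        sub_self ((k:ℂ)), zero_smul ℂ (w k), zero_add]
    rw [e] at hq
    have hmem : ∀ j ∈ s.erase k, ((j : ℂ) - (k : ℂ)) • w j ∈ P :=
      ihs _ (Finset.erase_ssubset hk) (fun j => ((j : ℂ) - (k : ℂ)) • w j)
        (fun j hj => Submodule.smul_mem _ _ (hW j (Finset.mem_of_mem_erase hj))) hq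
    have hwj : ∀ j ∈ s.erase k, w j ∈ P := by
      intro j hj
      have hjk : j ≠ k := Finset.ne_of_mem_erase hj
      have hne : ((j : ℂ) - (k : ℂ)) ≠ 0 := by
        rw [sub_ne_zero]
        exact_mod_cast hjk
      have e3 : w j = ((j : ℂ) - (k : ℂ))⁻¹ • (((j : ℂ) - (k : ℂ)) • w j) := by
        rw [smul_smul, inv_mul_cancel₀ hne, one_smul ℂ (w j)]
      rw [e3, Algebra.smul_def (A := GW a) (((j:ℂ) - (k:ℂ))⁻¹) (((j:ℂ) - (k:ℂ)) • w j)]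
      exact Ideal.mul_mem_left _ _ (hmem j hj)
    have e4 : w k = (∑ j ∈ s, w j) - ∑ j ∈ s.erase k, w j :=
      eq_sub_of_add_eq (Finset.add_sum_erase s w hk)
    rw [e4]
    exact Ideal.sub_mem _ hsum (Ideal.sum_mem _ hwj)

end GWaux


/-- For a prime Poisson ideal `P` of `A₁` that is stable under the
map `f(w) = {w,h}h⁻¹`, if `P` is nonzero then `P` contains a nonzero homogeneous
element `w_k ∈ W_k` for some `k ∈ ℤ`. -/
theorem GW_prime_poisson_ideal_homogeneous (a : L) (ha : a ≠ 0)
    (β : GW a → GW a → GW a) (hβ : IsGWBracket a β)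
    (P : Ideal (GW a)) (hprime : P.IsPrime)
    (hpoisson : ∀ p ∈ P, ∀ r : GW a, β p r ∈ P)
    (hf : ∀ p ∈ P, β p (gH a) * gHp a (-1) ∈ P)
    (hne : P ≠ ⊥) :
    ∃ k : ℤ, ∃ w ∈ W a k, w ≠ 0 ∧ w ∈ P := by
  obtain ⟨p, hpP, hp0⟩ := (Submodule.ne_bot_iff P).mp hne
  have hps := GWaux.mem_iSup_W (a := a) p
  rw [Submodule.mem_iSup_iff_exists_finsupp] at hps
  obtain ⟨c, hc, hsum⟩ := hps
  rw [Finsupp.sum] at hsum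
  have hall := GWaux.components_in_P hβ P hpoisson c.support (fun k => c k)
    (fun k _ => hc k) (by rw [hsum]; exact hpP)
  have hsupp : c.support.Nonempty := by
    by_contra h
    rw [Finset.not_nonempty_iff_eq_empty] at h
    apply hp0
    rw [← hsum, h, Finset.sum_empty]
  obtain ⟨k, hk⟩ := hsupp
  exact ⟨k, c k, hc k, Finsupp.mem_support_iff.mp hk, hall k hk⟩
end
end
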